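/- arXiv:1112.5421 — 7 statements merged into one kernel-verified Lean document; each statement's English description precedes it below -/
import Mathlib

section
/- For every G-semiorientation O there exists x : V → ℝ such that x(v) - x(u) > 1 for every oriented edge (u,v) ∈ O and |x(u) - x(v)| < 1 for every blank edge {u,v} of G. -/
namespace Soap

variable {V : Type*} {W : Type*}

/-- A partial orientation of `G`: a relation `O` such that `O u v` implies `{u,v}` is an
edge and the reverse pair is not in `O`. -/
def IsPartialOrientation (G : SimpleGraph V) (O : V → V → Prop) : Prop :=
  ∀ u v, O u v → G.Adj u v ∧ ¬ O v u

/-- The edge `{u,v}` of `G` is blank for the partial orientation `O`. -/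
def IsBlank (G : SimpleGraph V) (O : V → V → Prop) (u v : V) : Prop :=
  G.Adj u v ∧ ¬ O u v ∧ ¬ O v u

/-- A `G`-semiorientation: a partial orientation such that every potential cycle
(a cycle of `G`, here traversed as `c : ZMod n → V`, none of whose edges is oriented
against the traversal) has strictly more blank edges than oriented edges. -/
def IsSemiorientation (G : SimpleGraph V) (O : V → V → Prop) : Prop :=
  IsPartialOrientation G O ∧
  ∀ (n : ℕ) (c : ZMod n → V), 3 ≤ n → Function.Injective c →
    (∀ i, G.Adj (c i) (c (i + 1))) →
    (∀ i, ¬ O (c (i + 1)) (c i)) →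
    {i : ZMod n | O (c i) (c (i + 1))}.ncard <
      {i : ZMod n | IsBlank G O (c i) (c (i + 1))}.ncard

/-- A semiorder (unit interval order) given by its strict order relation `lt`. -/
def IsSemiorder (lt : V → V → Prop) : Prop :=
  ∃ t : V → ℝ, ∀ u v, lt u v ↔ t u + 1 < t v

/-- Compatibility of a (semi)order `lt` and a partial orientation `O`:
for every edge `{u,v}`, `u < v` iff `(u,v) ∈ O`. -/
def Compatible (G : SimpleGraph V) (lt : V → V → Prop) (O : V → V → Prop) : Prop :=
  ∀ u v, G.Adj u v → (lt u v ↔ O u v)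

/-- Indegree of a vertex with respect to a partial orientation. -/
noncomputable def indeg (O : V → V → Prop) (v : V) : ℕ := {u | O u v}.ncard

/-- `n_P(v)`: the number of vertices `u` with `u < v` and `{u,v}` an edge of `G`. -/
noncomputable def nP (G : SimpleGraph V) (lt : V → V → Prop) (v : V) : ℕ :=
  {u | lt u v ∧ G.Adj u v}.ncard

/-- Degree of a vertex in a graph. -/
noncomputable def vdeg (H : SimpleGraph W) (v : W) : ℕ := {u | H.Adj v u}.ncard

/-- A configuration `c` on the graph `H` with sink `q` is superstable:
`c ≥ 0` off the sink, and no nonempty set `X` of nonsink vertices can be fired legally,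
i.e. `c - Δ̃·1_X ≥ 0` fails (coordinatewise off the sink), where
`(Δ̃·1_X)_v = deg(v)·1_X(v) - #{u ∈ X : u ∼ v}`. -/
def Superstable (H : SimpleGraph W) (q : W) (c : W → ℤ) : Prop :=
  (∀ v, v ≠ q → 0 ≤ c v) ∧
  ¬ ∃ X : Set W, X.Nonempty ∧ q ∉ X ∧
    ∀ v, v ≠ q →
      0 ≤ c v - X.indicator (fun u => (vdeg H u : ℤ)) v + ({u | u ∈ X ∧ H.Adj v u}.ncard : ℤ)

/-- `K(G)`: the graph `G` with a new vertex `none` adjoined, joined to every vertex of `G`. -/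
def KG (G : SimpleGraph V) : SimpleGraph (Option V) where
  Adj x y := x ≠ y ∧ ∀ u v, x = some u → y = some v → G.Adj u v
  symm := by
    constructor
    rintro x y ⟨hne, h⟩
    exact ⟨hne.symm, fun u v hu hv => (h v u hv hu).symm⟩
  loopless := by constructor; rintro x ⟨hne, -⟩; exact hne rfl

/-- A divisor `c : V → ℤ` on `G` is quasi-superstable if the configuration
`v ↦ c v + 1` on `K(G)` (with sink the new vertex) is superstable. -/
def QuasiSuperstable (G : SimpleGraph V) (c : V → ℤ) : Prop :=
  Superstable (KG G) none (fun x => x.elim 0 (fun v => c v + 1))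

/-- An acyclic orientation of `G`: a partial orientation in which every edge is
oriented and which contains no directed cycle. -/
def IsAcyclicOrientation (G : SimpleGraph V) (O : V → V → Prop) : Prop :=
  IsPartialOrientation G O ∧ (∀ u v, G.Adj u v → O u v ∨ O v u) ∧
  ¬ ∃ (n : ℕ) (c : ZMod n → V), 0 < n ∧ Function.Injective c ∧ ∀ i, O (c i) (c (i + 1))

/-- The union of the hyperplanes `x u - x v = 1` of the `G`-semiorder arrangement. -/
def hyperplanesUnion (G : SimpleGraph V) : Set (V → ℝ) :=
  {x | ∃ u v, G.Adj u v ∧ x u - x v = 1}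

/-- The regions of the `G`-semiorder arrangement: connected components of the
complement of the union of its hyperplanes. -/
def Regions (G : SimpleGraph V) : Set (Set (V → ℝ)) :=
  {r | ∃ x, x ∉ hyperplanesUnion G ∧ r = connectedComponentIn (hyperplanesUnion G)ᶜ x}

/-- The candidate region attached to a partial orientation `O`. -/
def rho (G : SimpleGraph V) (O : V → V → Prop) : Set (V → ℝ) :=
  {x | (∀ u v, O u v → x v - x u > 1) ∧ (∀ u v, IsBlank G O u v → |x u - x v| < 1)}

/-- `K(G)₀`: the graph `G` with an edge `{v, v₀}` added for each vertex `v ≠ v₀`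
not already adjacent to `v₀`. -/
def KG0 (G : SimpleGraph V) (v₀ : V) : SimpleGraph V where
  Adj u v := G.Adj u v ∨ (u ≠ v ∧ (u = v₀ ∨ v = v₀))
  symm := by
    constructor
    rintro u v (h | ⟨hne, h⟩)
    · exact Or.inl h.symm
    · exact Or.inr ⟨hne.symm, h.symm⟩
  loopless := by
    constructor
    rintro v (h | ⟨hne, -⟩)
    · exact G.irrefl h
    · exact hne rfl

/-- The union of the hyperplanes of the `(G,v₀)`-semiorder arrangement. -/
def hyperplanesUnion0 (G : SimpleGraph V) (v₀ : V) : Set ({v : V // v ≠ v₀} → ℝ) :=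
  {x | ∃ u v : {v : V // v ≠ v₀}, G.Adj u.1 v.1 ∧ x u - x v = 1}

/-- The regions of the `(G,v₀)`-semiorder arrangement. -/
def Regions0 (G : SimpleGraph V) (v₀ : V) : Set (Set ({v : V // v ≠ v₀} → ℝ)) :=
  {r | ∃ x, x ∉ hyperplanesUnion0 G v₀ ∧
    r = connectedComponentIn (hyperplanesUnion0 G v₀)ᶜ x}

/-- The candidate region attached to a partial orientation `O`, in the sink context. -/
def rho0 (G : SimpleGraph V) (v₀ : V) (O : V → V → Prop) :
    Set ({v : V // v ≠ v₀} → ℝ) :=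
  {x | (∀ u v : {v : V // v ≠ v₀}, O u.1 v.1 → x v - x u > 1) ∧
    (∀ u v : {v : V // v ≠ v₀}, IsBlank G O u.1 v.1 → |x u - x v| < 1)}

section ShortestPath

/-- Auxiliary arc relation for the shortest-path argument: we may traverse an
oriented edge backwards or a blank edge in either direction. -/
def SPArc (G : SimpleGraph V) (O : V → V → Prop) (a b : V) : Prop :=
  O b a ∨ IsBlank G O a b

lemma sparc_adj {G : SimpleGraph V} {O : V → V → Prop}
    (hp : IsPartialOrientation G O) {a b : V} (h : SPArc G O a b) : G.Adj a b :=
  h.elim (fun h' => ((hp _ _ h').1).symm) (fun h' => h'.1)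

open Classical in
/-- Weight of an arc. -/
noncomputable def spwt (O : V → V → Prop) (ε : ℝ) (a b : V) : ℝ :=
  if O b a then -(1 + ε) else 1 - ε

lemma spwt_pos {O : V → V → Prop} {ε : ℝ} {a b : V} (h : O b a) :
    spwt O ε a b = -(1 + ε) := by simp [spwt, h]

lemma spwt_neg {O : V → V → Prop} {ε : ℝ} {a b : V} (h : ¬ O b a) :
    spwt O ε a b = 1 - ε := by simp [spwt, h]

/-- Weight of a walk given as a list of vertices. -/
noncomputable def splw (O : V → V → Prop) (ε : ℝ) : List V → ℝ
  | [] => 0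
  | [_] => 0
  | a :: b :: t => spwt O ε a b + splw O ε (b :: t)

@[simp] lemma splw_nil (O : V → V → Prop) (ε : ℝ) : splw O ε ([] : List V) = 0 := rfl

@[simp] lemma splw_single (O : V → V → Prop) (ε : ℝ) (a : V) : splw O ε [a] = 0 := rfl

@[simp] lemma splw_cons_cons (O : V → V → Prop) (ε : ℝ) (a b : V) (t : List V) :
    splw O ε (a :: b :: t) = spwt O ε a b + splw O ε (b :: t) := rfl

lemma splw_concat (O : V → V → Prop) (ε : ℝ) :
    ∀ (l : List V) (hl : l ≠ []) (b : V),
      splw O ε (l ++ [b]) = splw O ε l + spwt O ε (l.getLast hl) b := by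
  intro l
  induction l with
  | nil => intro h; exact absurd rfl h
  | cons a t ih =>
    intro h b
    cases t with
    | nil => simp
    | cons x s =>
      have hxs : (x :: s : List V) ≠ [] := by simp
      have hih := ih hxs b
      simp only [List.cons_append, splw_cons_cons] at *
      rw [hih, List.getLast_cons hxs]
      ring

lemma splw_split (O : V → V → Prop) (ε : ℝ) :
    ∀ (l₁ : List V) (y : V) (l₂ : List V),
      splw O ε (l₁ ++ y :: l₂) = splw O ε (l₁ ++ [y]) + splw O ε (y :: l₂) := by
  intro l₁
  induction l₁ with
  | nil => intro y l₂; simp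
  | cons a t ih =>
    intro y l₂
    cases t with
    | nil => simp
    | cons x s =>
      have hih := ih y l₂
      simp only [List.cons_append, splw_cons_cons] at hih ⊢
      rw [hih]
      ring

lemma splw_eq_sum (O : V → V → Prop) (ε : ℝ) (v₀ : V) :
    ∀ l : List V, splw O ε l =
      ∑ i ∈ Finset.range (l.length - 1), spwt O ε (l.getD i v₀) (l.getD (i + 1) v₀) := by
  intro l
  induction l with
  | nil => simp
  | cons a t ih =>
    cases t with
    | nil => simp
    | cons b s =>
      rw [splw_cons_cons, ih]
      have hlen : (a :: b :: s : List V).length - 1 = s.length + 1 := by simp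
      rw [hlen, Finset.sum_range_succ']
      have hlen2 : (b :: s : List V).length - 1 = s.length := by simp
      rw [hlen2]
      simp only [List.getD_cons_succ, List.getD_cons_zero]
      ring

end ShortestPath

lemma List.getLast_eq_get {α : Type*} (l : List α) (h : l ≠ []) :
    l.getLast h = l.get ⟨l.length - 1, by
      cases l with
      | nil => exact absurd rfl h
      | cons a t => simp⟩ :=
  List.getLast_eq_getElem h
section CycleBound

lemma cyc_nonneg {V : Type*} [Fintype V] {G : SimpleGraph V} {O : V → V → Prop}
    (hO : IsSemiorientation G O) {ε : ℝ} (hε0 : 0 < ε)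
    (hε1 : ε * (Fintype.card V) < 1) (n : ℕ) [NeZero n] (c : ZMod n → V) (hn : 2 ≤ n)
    (hinj : Function.Injective c) (harc : ∀ i, SPArc G O (c i) (c (i + 1))) :
    0 ≤ ∑ i : ZMod n, spwt O ε (c i) (c (i + 1)) := by
  classical
  have hnV : (n : ℝ) ≤ (Fintype.card V : ℝ) := by
    have h := Fintype.card_le_of_injective c hinj
    rw [ZMod.card] at h
    exact_mod_cast h
  have hεn : ε * n < 1 := lt_of_le_of_lt (by nlinarith) hε1
  by_cases h3 : 3 ≤ n
  · set c' : ZMod n → V := fun i => c (-i) with hc'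
    have hinj' : Function.Injective c' := fun i j h => neg_injective (hinj h)
    have harc' : ∀ i : ZMod n, SPArc G O (c' (i + 1)) (c' i) := by
      intro i
      have h := harc (-i - 1)
      have e1 : (-i - 1) + 1 = -i := by ring
      rw [e1] at h
      have e2 : -(i + 1) = -i - 1 := by ring
      simp only [hc']
      rw [e2]
      exact h
    have hadj : ∀ i, G.Adj (c' i) (c' (i + 1)) :=
      fun i => (sparc_adj hO.1 (harc' i)).symm
    have hno : ∀ i, ¬ O (c' (i + 1)) (c' i) := by
      intro i hcontra
      rcases harc' i with h | h
      · exact (hO.1 _ _ h).2 hcontra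
      · exact h.2.1 hcontra
    have hlt := hO.2 n c' h3 hinj' hadj hno
    have hncardk : {i : ZMod n | O (c' i) (c' (i + 1))}.ncard
        = (Finset.univ.filter (fun i : ZMod n => O (c' i) (c' (i + 1)))).card := by
      rw [← Set.ncard_coe_finset]
      congr 1
      ext i
      simp
    have hfneg : (Finset.univ.filter (fun i : ZMod n => ¬ O (c' i) (c' (i + 1))))
        = Finset.univ.filter (fun i : ZMod n => IsBlank G O (c' i) (c' (i + 1))) := by
      ext i
      simp only [Finset.mem_filter, Finset.mem_univ, true_and]
      constructor
      · intro hnp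
        rcases harc' i with h | h
        · exact absurd h hnp
        · exact ⟨h.1.symm, h.2.2, h.2.1⟩
      · intro hb
        exact hb.2.1
    have hncardm : {i : ZMod n | IsBlank G O (c' i) (c' (i + 1))}.ncard
        = (Finset.univ.filter (fun i : ZMod n => ¬ O (c' i) (c' (i + 1)))).card := by
      rw [hfneg, ← Set.ncard_coe_finset]
      congr 1
      ext i
      simp
    rw [hncardk, hncardm] at hlt
    set k := (Finset.univ.filter (fun i : ZMod n => O (c' i) (c' (i + 1)))).card with hk
    set m := (Finset.univ.filter (fun i : ZMod n => ¬ O (c' i) (c' (i + 1)))).card with hm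
    have hkmn : k + m = n := by
      have h := Finset.card_filter_add_card_filter_not
        (s := (Finset.univ : Finset (ZMod n))) (fun i : ZMod n => O (c' i) (c' (i + 1)))
      rw [Finset.card_univ, ZMod.card] at h
      exact h
    have hinvol : Function.Involutive (fun i : ZMod n => -i - 1) := by
      intro i; ring
    have hsum1 : ∑ i : ZMod n, spwt O ε (c i) (c (i + 1))
        = ∑ i : ZMod n, spwt O ε (c' (i + 1)) (c' i) := by
      rw [← Equiv.sum_comp hinvol.toPerm (fun i => spwt O ε (c i) (c (i + 1)))]
      apply Finset.sum_congr rfl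
      intro i _
      simp only [Function.Involutive.coe_toPerm]
      simp only [hc']
      congr 1
      · congr 1; ring
      · congr 1; ring
    have hsum2 : ∑ i : ZMod n, spwt O ε (c' (i + 1)) (c' i)
        = (k : ℝ) * (-(1 + ε)) + (m : ℝ) * (1 - ε) := by
      rw [← Finset.sum_filter_add_sum_filter_not Finset.univ
        (fun i : ZMod n => O (c' i) (c' (i + 1))) (fun i => spwt O ε (c' (i + 1)) (c' i))]
      have h1 : ∑ i ∈ Finset.univ.filter (fun i : ZMod n => O (c' i) (c' (i + 1))),
          spwt O ε (c' (i + 1)) (c' i) = (k : ℝ) * (-(1 + ε)) := by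
        rw [Finset.sum_congr rfl (fun i hi => spwt_pos (Finset.mem_filter.mp hi).2),
          Finset.sum_const, hk, nsmul_eq_mul]
      have h2 : ∑ i ∈ Finset.univ.filter (fun i : ZMod n => ¬ O (c' i) (c' (i + 1))),
          spwt O ε (c' (i + 1)) (c' i) = (m : ℝ) * (1 - ε) := by
        rw [Finset.sum_congr rfl (fun i hi => spwt_neg (Finset.mem_filter.mp hi).2),
          Finset.sum_const, hm, nsmul_eq_mul]
      rw [h1, h2]
    rw [hsum1, hsum2]
    have hkm' : (k : ℝ) + 1 ≤ (m : ℝ) := by exact_mod_cast hlt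
    have hkmn' : (k : ℝ) + (m : ℝ) = (n : ℝ) := by exact_mod_cast hkmn
    nlinarith
  · have hn2 : n = 2 := by omega
    subst hn2
    have hkey : ∀ i : ZMod 2, ¬ O (c (i + 1)) (c i) := by
      intro i hOi
      have h11 : (1 + 1 : ZMod 2) = 0 := rfl
      have h21 : i + 1 + 1 = i := by rw [add_assoc, h11, add_zero]
      have h2 := harc (i + 1)
      rw [h21] at h2
      rcases h2 with h2 | h2
      · exact (hO.1 _ _ h2).2 hOi
      · exact h2.2.1 hOi
    have hterm : ∀ i : ZMod 2, spwt O ε (c i) (c (i + 1)) = 1 - ε :=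
      fun i => spwt_neg (hkey i)
    rw [Finset.sum_congr rfl (fun i _ => hterm i), Finset.sum_const, Finset.card_univ,
      ZMod.card, nsmul_eq_mul]
    have : ε * (2 : ℕ) < 1 := hεn
    push_cast at this ⊢
    nlinarith

end CycleBound
section Paths

/-- Nodup walks (paths) compatible with the arc relation, ending at `v`. -/
def pathsTo (G : SimpleGraph V) (O : V → V → Prop) (v : V) : Set (List V) :=
  {l | l ≠ [] ∧ l.Nodup ∧ l.Chain' (SPArc G O) ∧ l.getLast? = some v}

lemma pathsTo_finite [Fintype V] (G : SimpleGraph V) (O : V → V → Prop) (v : V) :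
    (pathsTo G O v).Finite := by
  apply Set.Finite.subset (List.finite_length_le V (Fintype.card V))
  rintro l ⟨-, hnd, -, -⟩
  exact hnd.length_le_card

lemma singleton_mem_pathsTo (G : SimpleGraph V) (O : V → V → Prop) (v : V) :
    [v] ∈ pathsTo G O v := ⟨by simp, by simp, List.isChain_singleton v, by simp⟩

/-- Shortest-path potential. -/
noncomputable def dd (G : SimpleGraph V) (O : V → V → Prop) (ε : ℝ) (v : V) : ℝ :=
  sInf (splw O ε '' pathsTo G O v)

lemma dd_le [Fintype V] (G : SimpleGraph V) (O : V → V → Prop) (ε : ℝ) (v : V)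
    {l : List V} (hl : l ∈ pathsTo G O v) : dd G O ε v ≤ splw O ε l :=
  csInf_le ((pathsTo_finite G O v).image _).bddBelow ⟨l, hl, rfl⟩

lemma dd_exists [Fintype V] (G : SimpleGraph V) (O : V → V → Prop) (ε : ℝ) (v : V) :
    ∃ l ∈ pathsTo G O v, dd G O ε v = splw O ε l := by
  have hne : (splw O ε '' pathsTo G O v).Nonempty :=
    ⟨_, ⟨[v], singleton_mem_pathsTo G O v, rfl⟩⟩
  obtain ⟨l, hl, h⟩ := hne.csInf_mem ((pathsTo_finite G O v).image _)
  exact ⟨l, hl, h.symm⟩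

/-- Closed nodup walks have nonnegative weight. -/
lemma closed_nonneg [Fintype V] {G : SimpleGraph V} {O : V → V → Prop}
    (hO : IsSemiorientation G O) {ε : ℝ} (hε0 : 0 < ε)
    (hε1 : ε * (Fintype.card V) < 1) (l : List V) (hne : l ≠ [])
    (h2 : 2 ≤ l.length) (hnd : l.Nodup) (hch : l.Chain' (SPArc G O))
    (hcl : SPArc G O (l.getLast hne) (l.head hne)) :
    0 ≤ splw O ε l + spwt O ε (l.getLast hne) (l.head hne) := by
  classical
  set n := l.length with hn
  haveI : NeZero n := ⟨by omega⟩
  haveI : Fact (1 < n) := ⟨by omega⟩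
  have hget : ∀ i : ZMod n, i.val < l.length := fun i => ZMod.val_lt i
  set c : ZMod n → V := fun i => l.get ⟨i.val, hget i⟩ with hc
  have hcinj : Function.Injective c := by
    intro i j hij
    have h := List.nodup_iff_injective_get.mp hnd hij
    have hv : i.val = j.val := by simpa using congrArg Fin.val h
    exact ZMod.val_injective n hv
  have hval1 : ∀ i : ZMod n, (i + 1).val = (i.val + 1) % n := by
    intro i; rw [ZMod.val_add, ZMod.val_one]
  have harc : ∀ i : ZMod n, SPArc G O (c i) (c (i + 1)) := by
    intro i
    by_cases h : i.val + 1 < n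
    · have hv : (i + 1).val = i.val + 1 := by rw [hval1, Nat.mod_eq_of_lt h]
      have hcc := List.isChain_iff_getElem.mp hch i.val (by omega)
      have e1 : c i = l.get ⟨i.val, by omega⟩ := rfl
      have e2 : c (i + 1) = l.get ⟨i.val + 1, by omega⟩ := by
        simp only [hc]
        congr 1
        exact Fin.ext hv
      rw [e1, e2]
      exact hcc
    · have hin : i.val + 1 = n := by have := ZMod.val_lt i; omega
      have hv : (i + 1).val = 0 := by rw [hval1, hin, Nat.mod_self]
      have e1 : c i = l.getLast hne := by
        simp only [hc]
        rw [List.getLast_eq_get]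
        congr 1
        apply Fin.ext
        show i.val = l.length - 1
        omega
      have e2 : c (i + 1) = l.head hne := by
        simp only [hc]
        have : (⟨(i + 1).val, hget (i + 1)⟩ : Fin l.length) = ⟨0, by omega⟩ :=
          Fin.ext hv
        rw [this, List.get_mk_zero]
      rw [e1, e2]
      exact hcl
  have hcyc := cyc_nonneg hO hε0 hε1 n c h2 hcinj harc
  have hsum : ∑ i : ZMod n, spwt O ε (c i) (c (i + 1))
      = splw O ε l + spwt O ε (l.getLast hne) (l.head hne) := by
    set v₀ := l.head hne with hv₀
    have hgetD : ∀ (m : ℕ) (hm : m < l.length), l.getD m v₀ = l.get ⟨m, hm⟩ :=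
      fun m hm => List.getD_eq_get l v₀ ⟨m, hm⟩
    have step1 : ∀ i : ZMod n, spwt O ε (c i) (c (i + 1))
        = spwt O ε (l.getD i.val v₀) (l.getD ((i.val + 1) % n) v₀) := by
      intro i
      have hfin : (⟨(i + 1).val, hget (i + 1)⟩ : Fin l.length)
          = ⟨(i.val + 1) % n, Nat.mod_lt _ (by omega)⟩ := by
        apply Fin.ext
        show (i + 1).val = (i.val + 1) % n
        exact hval1 i
      rw [hgetD i.val (hget i), hgetD ((i.val + 1) % n) (Nat.mod_lt _ (by omega))]
      simp only [hc]
      rw [hfin]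
    have hbij : Function.Bijective (fun i : ZMod n => (⟨i.val, ZMod.val_lt i⟩ : Fin n)) := by
      rw [Fintype.bijective_iff_injective_and_card]
      constructor
      · intro i j hij
        exact ZMod.val_injective n (by simpa using congrArg Fin.val hij)
      · rw [ZMod.card, Fintype.card_fin]
    have hfin : ∑ i : ZMod n, spwt O ε (c i) (c (i + 1))
        = ∑ j : Fin n, spwt O ε (l.getD j.val v₀) (l.getD ((j.val + 1) % n) v₀) :=
      Fintype.sum_bijective _ hbij _ _ (fun i => step1 i)
    rw [hfin]
    have hrange : ∑ j : Fin n, spwt O ε (l.getD j.val v₀) (l.getD ((j.val + 1) % n) v₀)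
        = ∑ m ∈ Finset.range n, spwt O ε (l.getD m v₀) (l.getD ((m + 1) % n) v₀) :=
      Fin.sum_univ_eq_sum_range
        (fun m : ℕ => spwt O ε (l.getD m v₀) (l.getD ((m + 1) % n) v₀)) n
    rw [hrange]
    obtain ⟨n', hn'⟩ : ∃ n', n = n' + 1 := ⟨n - 1, by omega⟩
    rw [hn', Finset.sum_range_succ]
    have hlastterm : spwt O ε (l.getD n' v₀) (l.getD ((n' + 1) % (n' + 1)) v₀)
        = spwt O ε (l.getLast hne) (l.head hne) := by
      rw [Nat.mod_self]
      have hh1 : l.getD n' v₀ = l.getLast hne := by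
        rw [hgetD n' (by omega), List.getLast_eq_get]
        congr 1
        apply Fin.ext
        show n' = l.length - 1
        omega
      have hh2 : l.getD 0 v₀ = l.head hne := by
        rw [hgetD 0 (by omega), List.get_mk_zero]
      rw [hh1, hh2]
    rw [hlastterm]
    have hmain : ∑ m ∈ Finset.range n', spwt O ε (l.getD m v₀) (l.getD ((m + 1) % (n' + 1)) v₀)
        = splw O ε l := by
      rw [splw_eq_sum O ε v₀ l]
      have hlen : l.length - 1 = n' := by omega
      rw [hlen]
      apply Finset.sum_congr rfl
      intro m hm
      have hm' : m < n' := Finset.mem_range.mp hm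
      rw [Nat.mod_eq_of_lt (by omega)]
    rw [hmain]
  rw [hsum] at hcyc
  exact hcyc

end Paths
section Relax

lemma dd_relax [Fintype V] {G : SimpleGraph V} {O : V → V → Prop}
    (hO : IsSemiorientation G O) {ε : ℝ} (hε0 : 0 < ε)
    (hε1 : ε * (Fintype.card V) < 1) {a b : V} (hab : SPArc G O a b) :
    dd G O ε b ≤ dd G O ε a + spwt O ε a b := by
  classical
  obtain ⟨l, hl, hdl⟩ := dd_exists G O ε a
  obtain ⟨hne, hnd, hch, hlast⟩ := hl
  have hlasteq : l.getLast hne = a := by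
    rw [List.getLast?_eq_getLast hne] at hlast
    exact Option.some_injective _ hlast
  have hAdj : G.Adj a b := sparc_adj hO.1 hab
  by_cases hbmem : b ∈ l
  · obtain ⟨l₁, l₂, rfl⟩ := List.append_of_mem hbmem
    have hs_suffix : (b :: l₂) <:+ (l₁ ++ b :: l₂) := ⟨l₁, rfl⟩
    have hp_prefix : (l₁ ++ [b]) <+: (l₁ ++ b :: l₂) := ⟨l₂, by simp⟩
    have hp_mem : (l₁ ++ [b]) ∈ pathsTo G O b := by
      refine ⟨by simp, List.Nodup.sublist hp_prefix.sublist hnd,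
        hch.prefix hp_prefix, List.getLast?_concat⟩
    have hdb : dd G O ε b ≤ splw O ε (l₁ ++ [b]) := dd_le G O ε b hp_mem
    have hsne : (b :: l₂ : List V) ≠ [] := by simp
    have hs_nd : (b :: l₂).Nodup := List.Nodup.sublist hs_suffix.sublist hnd
    have hs_ch : (b :: l₂).Chain' (SPArc G O) := hch.suffix hs_suffix
    have hs_last : (b :: l₂).getLast hsne = a := by
      have h1 : (b :: l₂).getLast? = some a := by
        rw [List.getLast?_append] at hlast
        rw [List.getLast?_eq_getLast hsne] at hlast ⊢
        simpa using hlast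
      rw [List.getLast?_eq_getLast hsne] at h1
      exact Option.some_injective _ h1
    have hbna : b ≠ a := hAdj.ne'
    have hs_len : 2 ≤ (b :: l₂ : List V).length := by
      cases l₂ with
      | nil => exact absurd hs_last hbna
      | cons x s => simp
    have hclose : SPArc G O ((b :: l₂).getLast hsne) ((b :: l₂).head hsne) := by
      rw [hs_last]
      exact hab
    have h0 := closed_nonneg hO hε0 hε1 (b :: l₂) hsne hs_len hs_nd hs_ch hclose
    rw [hs_last] at h0
    have hsplit := splw_split O ε l₁ b l₂
    have hhead : (b :: l₂).head hsne = b := rfl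
    rw [hhead] at h0
    linarith
  · have hmem : (l ++ [b]) ∈ pathsTo G O b := by
      refine ⟨by simp, ?_, ?_, List.getLast?_concat⟩
      · rw [List.nodup_append]
        exact ⟨hnd, List.nodup_singleton b, fun x hx y hy hxy => hbmem (by simp at hy; subst hy; exact hxy ▸ hx)⟩
      · rw [show List.Chain' (SPArc G O) (l ++ [b]) = List.IsChain (SPArc G O) (l ++ [b]) from rfl,
          List.isChain_append]
        refine ⟨hch, List.isChain_singleton b, ?_⟩
        intro x hx y hy
        simp only [List.head?_cons, Option.mem_some_iff] at hy
        rw [List.getLast?_eq_getLast hne, Option.mem_some_iff] at hx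
        subst hy
        rw [← hx, hlasteq]
        exact hab
    have hdb := dd_le G O ε b hmem
    rw [splw_concat O ε l hne b, hlasteq] at hdb
    linarith

end Relax

/-- For every `G`-semiorientation `O` there exists `x : V → ℝ` with
`x v - x u > 1` for every oriented edge `(u,v) ∈ O` and `|x u - x v| < 1` for
every blank edge `{u,v}` of `G`. -/

theorem stmt1 {V : Type*} [Fintype V] (G : SimpleGraph V) (hconn : G.Connected)
    (O : V → V → Prop) (hO : IsSemiorientation G O) :
    ∃ x : V → ℝ, (∀ u v, O u v → x v - x u > 1) ∧
      (∀ u v, IsBlank G O u v → |x u - x v| < 1) := by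
  classical
  set ε : ℝ := ((Fintype.card V : ℝ) + 1)⁻¹ with hε
  have hc0 : (0 : ℝ) < (Fintype.card V : ℝ) + 1 := by positivity
  have hε0 : 0 < ε := by positivity
  have hε1 : ε * (Fintype.card V) < 1 := by
    have heq : ε * (Fintype.card V : ℝ) = (Fintype.card V : ℝ) / ((Fintype.card V : ℝ) + 1) := by
      rw [hε]; ring
    rw [heq, div_lt_one hc0]
    linarith
  refine ⟨dd G O ε, ?_, ?_⟩
  · intro u v huv
    have h := dd_relax hO hε0 hε1 (a := v) (b := u) (Or.inl huv)
    rw [spwt_pos huv] at h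
    have : (1 : ℝ) < 1 + ε := by linarith
    simp only [gt_iff_lt]
    linarith
  · intro u v huv
    have hsymm : IsBlank G O v u := ⟨huv.1.symm, huv.2.2, huv.2.1⟩
    have h1 := dd_relax hO hε0 hε1 (a := u) (b := v) (Or.inr huv)
    have h2 := dd_relax hO hε0 hε1 (a := v) (b := u) (Or.inr hsymm)
    rw [spwt_neg huv.2.2] at h1
    rw [spwt_neg huv.2.1] at h2
    rw [abs_lt]
    constructor <;> linarith

end Soap
end

section
/- The map ρ sending each G-semiorientation O to the set ρ(O) = {x ∈ ℝ^V : x(v) - x(u) > 1 for every (u,v) ∈ O and |x(u) - x(v)| < 1 for every blank edge {u,v}} is a well-defined bijection from the set of G-semiorientations onto the set of regions of the G-semiorder arrangement. -/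
namespace Soap

variable {V : Type*} {W : Type*}

section Aux

/-- The orientation induced by a point. -/
def Oof (G : SimpleGraph V) (x : V → ℝ) (u v : V) : Prop := G.Adj u v ∧ 1 < x v - x u

lemma not_mem_hyp_iff {G : SimpleGraph V} {x : V → ℝ} :
    x ∉ hyperplanesUnion G ↔ ∀ u v, G.Adj u v → x u - x v ≠ 1 := by
  simp [hyperplanesUnion]

lemma Oof_partial (G : SimpleGraph V) (x : V → ℝ) : IsPartialOrientation G (Oof G x) := by
  intro u v ⟨hadj, hgt⟩
  exact ⟨hadj, fun ⟨_, hgt'⟩ => by linarith⟩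

lemma blank_Oof {G : SimpleGraph V} {x : V → ℝ} (hx : x ∉ hyperplanesUnion G) {u v : V}
    (h : IsBlank G (Oof G x) u v) : |x u - x v| < 1 := by
  obtain ⟨hadj, h1, h2⟩ := h
  rw [not_mem_hyp_iff] at hx
  have n1 := hx u v hadj
  have n2 := hx v u hadj.symm
  simp only [Oof, hadj, hadj.symm, true_and, not_lt] at h1 h2
  rw [abs_lt]
  constructor
  · rcases lt_or_eq_of_le h1 with h | h
    · linarith
    · exact absurd (by linarith) n2
  · rcases lt_or_eq_of_le h2 with h | h
    · linarith
    · exact absurd (by linarith) n1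

lemma mem_rho_Oof {G : SimpleGraph V} {x : V → ℝ} (hx : x ∉ hyperplanesUnion G) :
    x ∈ rho G (Oof G x) :=
  ⟨fun _ _ h => h.2, fun _ _ h => blank_Oof hx h⟩

lemma rho_subset_compl {G : SimpleGraph V} {O : V → V → Prop}
    (hO : IsPartialOrientation G O) : rho G O ⊆ (hyperplanesUnion G)ᶜ := by
  rintro x ⟨h1, h2⟩ ⟨u, v, hadj, heq⟩
  by_cases huv : O u v
  · have := h1 u v huv; linarith
  by_cases hvu : O v u
  · have := h1 v u hvu; linarith
  · have := h2 u v ⟨hadj, huv, hvu⟩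
    rw [abs_lt] at this; linarith

lemma eq_Oof {G : SimpleGraph V} {O : V → V → Prop} {x : V → ℝ}
    (hO : IsPartialOrientation G O) (hx : x ∈ rho G O) : O = Oof G x := by
  funext u v
  apply propext
  constructor
  · intro h
    exact ⟨(hO u v h).1, hx.1 u v h⟩
  · rintro ⟨hadj, hgt⟩
    by_contra huv
    by_cases hvu : O v u
    · have := hx.1 v u hvu; linarith
    · have := hx.2 u v ⟨hadj, huv, hvu⟩
      rw [abs_lt] at this; linarith

lemma convex_rho (G : SimpleGraph V) (O : V → V → Prop) : Convex ℝ (rho G O) := by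
  rintro y ⟨hy1, hy2⟩ z ⟨hz1, hz2⟩ a b ha hb hab
  have key : ∀ p q : ℝ, 1 < p → 1 < q → 1 < a * p + b * q := by
    intro p q hp hq
    rcases eq_or_lt_of_le ha with h | h
    · have hb1 : b = 1 := by linarith
      simp [← h, hb1, hq]
    · nlinarith
  refine ⟨fun u v h => ?_, fun u v h => ?_⟩
  · have e : (a • y + b • z) v - (a • y + b • z) u = a * (y v - y u) + b * (z v - z u) := by
      simp only [Pi.add_apply, Pi.smul_apply, smul_eq_mul]; ring
    rw [gt_iff_lt, e]
    exact key _ _ (hy1 u v h) (hz1 u v h)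
  · have h1 := abs_lt.mp (hy2 u v h); have h2 := abs_lt.mp (hz2 u v h)
    have e : (a • y + b • z) u - (a • y + b • z) v = a * (y u - y v) + b * (z u - z v) := by
      simp only [Pi.add_apply, Pi.smul_apply, smul_eq_mul]; ring
    rw [e, abs_lt]
    constructor
    · have := key ((y u - y v) + 2) ((z u - z v) + 2) (by linarith) (by linarith)
      nlinarith
    · have := key (2 - (y u - y v)) (2 - (z u - z v)) (by linarith) (by linarith)
      nlinarith

lemma sign_const {f : (V → ℝ) → ℝ} (hf : Continuous f) {S : Set (V → ℝ)}
    (hS : IsPreconnected S) (hne : ∀ z ∈ S, f z ≠ 1) {x y : (V → ℝ)}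
    (hx : x ∈ S) (hy : y ∈ S) (hfx : f x < 1) : f y < 1 := by
  have hsub : S ⊆ {z | f z < 1} ∪ {z | 1 < f z} := by
    intro z hz
    rcases lt_or_gt_of_ne (hne z hz) with h | h
    · exact Or.inl h
    · exact Or.inr h
  have h := IsPreconnected.subset_left_of_subset_union
    (isOpen_lt hf continuous_const) (isOpen_lt continuous_const hf)
    (by rw [Set.disjoint_left]; intro z h1 h2; exact absurd h2 (by simp at h1 ⊢; linarith))
    hsub ⟨x, hx, hfx⟩ hS
  exact h hy



open Classical in
lemma ncard_filter_eq {n : ℕ} [NeZero n] (p : ZMod n → Prop) :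
    {i : ZMod n | p i}.ncard = (Finset.univ.filter p).card := by
  rw [Set.ncard_eq_toFinset_card']
  congr 1
  ext i
  simp

lemma sign_lt (a b : V) {S : Set (V → ℝ)} (hS : IsPreconnected S)
    (hne : ∀ z ∈ S, z a - z b ≠ 1) {x y : V → ℝ} (hx : x ∈ S) (hy : y ∈ S)
    (hfx : x a - x b < 1) : y a - y b < 1 := by
  have := sign_const (f := fun z => z a - z b)
    ((continuous_apply a).sub (continuous_apply b)) hS hne hx hy hfx
  simpa using this

lemma sign_gt (a b : V) {S : Set (V → ℝ)} (hS : IsPreconnected S)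
    (hne : ∀ z ∈ S, z a - z b ≠ 1) {x y : V → ℝ} (hx : x ∈ S) (hy : y ∈ S)
    (hfx : 1 < x a - x b) : 1 < y a - y b := by
  have := sign_const (f := fun z => 2 - (z a - z b))
    (continuous_const.sub ((continuous_apply a).sub (continuous_apply b))) hS
    (fun z hz h => hne z hz (by simpa using by linarith [show (2:ℝ) - (z a - z b) = 1 from h]))
    hx hy (by simpa using by linarith)
  linarith

open Classical in
lemma semior_Oof {G : SimpleGraph V} [Fintype V] {x : V → ℝ} (hx : x ∉ hyperplanesUnion G) :
    IsSemiorientation G (Oof G x) := by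
  refine ⟨Oof_partial G x, fun n c hn hinj hadj hrev => ?_⟩
  haveI : NeZero n := ⟨by omega⟩
  set p : ZMod n → Prop := fun i => Oof G x (c i) (c (i + 1)) with hp
  have hclass : ∀ i, ¬ p i → IsBlank G (Oof G x) (c i) (c (i + 1)) := by
    intro i hi
    exact ⟨hadj i, hi, hrev i⟩
  have hblank_eq : {i : ZMod n | IsBlank G (Oof G x) (c i) (c (i + 1))} = {i | ¬ p i} := by
    ext i
    simp only [Set.mem_setOf_eq]
    exact ⟨fun h => h.2.1, hclass i⟩
  set f : ZMod n → ℝ := fun i => x (c (i + 1)) - x (c i) with hf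
  have hsum0 : ∑ i : ZMod n, f i = 0 := by
    have : ∑ i : ZMod n, x (c (i + 1)) = ∑ i : ZMod n, x (c i) :=
      Fintype.sum_equiv (Equiv.addRight (1 : ZMod n)) _ _ (fun i => rfl)
    simp only [hf, Finset.sum_sub_distrib, this, sub_self]
  have hlt : ∀ i ∈ Finset.univ, (if p i then (1:ℝ) else -1) < f i := by
    intro i _
    by_cases hi : p i
    · simpa [hi] using hi.2
    · have := blank_Oof hx (hclass i hi)
      rw [abs_lt] at this
      simp only [hi, if_false, hf]
      linarith [this.2]
  have hsumlt : ∑ i : ZMod n, (if p i then (1:ℝ) else -1) < 0 := by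
    rw [← hsum0]
    exact Finset.sum_lt_sum_of_nonempty ⟨0, Finset.mem_univ 0⟩ hlt
  rw [Finset.sum_ite, Finset.sum_const, Finset.sum_const] at hsumlt
  simp only [nsmul_eq_mul, mul_one, mul_neg_one] at hsumlt
  rw [hblank_eq, ncard_filter_eq, ncard_filter_eq]
  have hc : ((Finset.univ.filter p).card : ℝ) < ((Finset.univ.filter (fun i => ¬ p i)).card : ℝ) := by
    linarith
  have hc2 : (Finset.univ.filter p).card < (Finset.univ.filter (fun i => ¬ p i)).card :=
    Nat.cast_lt (α := ℝ) |>.mp hc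
  convert hc2 using 2
  exact Finset.filter_congr_decidable _ _ _

lemma component_subset_rho {G : SimpleGraph V} {x : V → ℝ} (hx : x ∉ hyperplanesUnion G) :
    connectedComponentIn (hyperplanesUnion G)ᶜ x ⊆ rho G (Oof G x) := by
  set S := connectedComponentIn (hyperplanesUnion G)ᶜ x with hS
  have hpre : IsPreconnected S := isPreconnected_connectedComponentIn
  have hsub : S ⊆ (hyperplanesUnion G)ᶜ := connectedComponentIn_subset _ _
  have hxS : x ∈ S := mem_connectedComponentIn hx
  have hne : ∀ u v : V, G.Adj u v → ∀ z ∈ S, z u - z v ≠ 1 := by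
    intro u v hadj z hz
    exact (not_mem_hyp_iff.mp (hsub hz)) u v hadj
  intro y hy
  constructor
  · rintro u v ⟨hadj, hgt⟩
    exact sign_gt v u hpre (hne v u hadj.symm) hxS hy hgt
  · rintro u v hbl
    have habs := abs_lt.mp (blank_Oof hx hbl)
    have hadj := hbl.1
    have k1 := sign_lt u v hpre (hne u v hadj) hxS hy habs.2
    have k2 := sign_lt v u hpre (hne v u hadj.symm) hxS hy (by linarith [habs.1])
    rw [abs_lt]
    constructor <;> linarith

lemma rho_Oof_eq_component {G : SimpleGraph V} {x : V → ℝ} (hx : x ∉ hyperplanesUnion G) :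
    rho G (Oof G x) = connectedComponentIn (hyperplanesUnion G)ᶜ x := by
  apply Set.Subset.antisymm
  · exact (convex_rho G (Oof G x)).isPreconnected.subset_connectedComponentIn
      (mem_rho_Oof hx) (rho_subset_compl (Oof_partial G x))
  · exact component_subset_rho hx



section Potential

open Classical

def Arc (G : SimpleGraph V) (O : V → V → Prop) (u v : V) : Prop := O u v ∨ IsBlank G O u v

noncomputable def eps (V : Type*) [Fintype V] : ℝ := ((Fintype.card V : ℝ) + 1)⁻¹

lemma eps_pos [Fintype V] : 0 < eps V := by
  unfold eps
  positivity

noncomputable def wgt [Fintype V] (G : SimpleGraph V) (O : V → V → Prop) (u v : V) : ℝ :=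
  if O u v then -(1 + eps V) else 1 - eps V

noncomputable def wt [Fintype V] (G : SimpleGraph V) (O : V → V → Prop) : List V → ℝ
  | [] => 0
  | [_] => 0
  | a :: b :: t => wgt G O a b + wt G O (b :: t)

variable [Fintype V] {G : SimpleGraph V} {O : V → V → Prop}
set_option linter.unusedSectionVars false

lemma arc_adj {u v : V} (hO : IsPartialOrientation G O) (h : Arc G O u v) : G.Adj u v := by
  rcases h with h | h
  · exact (hO u v h).1
  · exact h.1

lemma arc_not_rev {u v : V} (hO : IsPartialOrientation G O) (h : Arc G O u v) : ¬ O v u := by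
  rcases h with h | h
  · exact (hO u v h).2
  · exact h.2.2

lemma blank_symm {u v : V} (h : IsBlank G O u v) : IsBlank G O v u :=
  ⟨h.1.symm, h.2.2, h.2.1⟩

lemma wt_getD (d : V) : ∀ l : List V,
    wt G O l = ∑ i ∈ Finset.range (l.length - 1), wgt G O (l.getD i d) (l.getD (i + 1) d)
  | [] => by simp [wt]
  | [a] => by simp [wt]
  | a :: b :: t => by
    rw [show wt G O (a :: b :: t) = wgt G O a b + wt G O (b :: t) from rfl, wt_getD d (b :: t)]
    have hlen : (a :: b :: t).length - 1 = ((b :: t).length - 1) + 1 := by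
      simp
    rw [hlen, Finset.sum_range_succ']
    simp only [List.getD_cons_succ, List.getD_cons_zero]
    ring

lemma wt_append_cons (y : V) (ys : List V) : ∀ xs : List V,
    wt G O (xs ++ y :: ys) = wt G O (xs ++ [y]) + wt G O (y :: ys)
  | [] => by
    cases ys <;> simp [wt]
  | [x] => by
    show wt G O (x :: y :: ys) = wt G O (x :: [y]) + wt G O (y :: ys)
    rw [show wt G O (x :: y :: ys) = wgt G O x y + wt G O (y :: ys) from rfl]
    simp [wt]
  | x :: x' :: xs => by
    have h1 : wt G O ((x :: x' :: xs) ++ y :: ys) = wgt G O x x' + wt G O ((x' :: xs) ++ y :: ys) := rfl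
    have h2 : wt G O ((x :: x' :: xs) ++ [y]) = wgt G O x x' + wt G O ((x' :: xs) ++ [y]) := rfl
    rw [h1, h2, wt_append_cons y ys (x' :: xs)]
    ring

lemma wt_append_singleton (y : V) : ∀ (l : List V) (h : l ≠ []),
    wt G O (l ++ [y]) = wt G O l + wgt G O (l.getLast h) y
  | [], h => absurd rfl h
  | [a], _ => by simp [wt]
  | a :: b :: t, _ => by
    have h1 : wt G O ((a :: b :: t) ++ [y]) = wgt G O a b + wt G O ((b :: t) ++ [y]) := rfl
    rw [h1, wt_append_singleton y (b :: t) (by simp)]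
    rw [show wt G O (a :: b :: t) = wgt G O a b + wt G O (b :: t) from rfl]
    rw [show (a :: b :: t).getLast (by simp) = (b :: t).getLast (by simp) from
      List.getLast_cons (by simp)]
    ring



lemma cycle_sum (hO : IsSemiorientation G O) {k : ℕ} [NeZero k] (hk3 : 3 ≤ k) (c : ZMod k → V)
    (hinj : Function.Injective c) (harc : ∀ i, Arc G O (c i) (c (i + 1))) :
    0 < ∑ i : ZMod k, wgt G O (c i) (c (i + 1)) := by
  have hadj : ∀ i, G.Adj (c i) (c (i + 1)) := fun i => arc_adj hO.1 (harc i)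
  have hrev : ∀ i, ¬ O (c (i + 1)) (c i) := fun i => arc_not_rev hO.1 (harc i)
  have hcount := hO.2 k c hk3 hinj hadj hrev
  set p : ZMod k → Prop := fun i => O (c i) (c (i + 1)) with hp
  have hblank_eq : {i : ZMod k | IsBlank G O (c i) (c (i + 1))} = {i | ¬ p i} := by
    ext i
    simp only [Set.mem_setOf_eq]
    refine ⟨fun h => h.2.1, fun h => ?_⟩
    rcases harc i with h' | h'
    · exact absurd h' h
    · exact h'
  rw [hblank_eq, ncard_filter_eq, ncard_filter_eq] at hcount
  have hcount' : (Finset.univ.filter p).card < (Finset.univ.filter (fun i => ¬ p i)).card := by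
    convert hcount using 2
    first
    | exact Finset.filter_congr_decidable _ _ _
    | exact (Finset.filter_congr_decidable _ _ _).symm
  clear hcount
  set o := (Finset.univ.filter p).card with ho
  set b := (Finset.univ.filter (fun i => ¬ p i)).card with hb
  have hob : o + b = k := by
    rw [ho, hb, Finset.card_filter_add_card_filter_not, Finset.card_univ, ZMod.card]
  have hkN : k ≤ Fintype.card V := by
    have := Fintype.card_le_of_injective c hinj
    rwa [ZMod.card] at this
  have hsum : ∑ i : ZMod k, wgt G O (c i) (c (i + 1)) =
      (o : ℝ) * (-(1 + eps V)) + (b : ℝ) * (1 - eps V) := by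
    have : ∀ i : ZMod k, wgt G O (c i) (c (i + 1)) =
        if p i then -(1 + eps V) else 1 - eps V := by
      intro i
      rfl
    rw [Finset.sum_congr rfl (fun i _ => this i), Finset.sum_ite, Finset.sum_const,
      Finset.sum_const]
    simp only [nsmul_eq_mul]
    congr
  rw [hsum]
  set N : ℝ := (Fintype.card V : ℝ) with hN
  have hNnn : 0 ≤ N := by positivity
  have hepsval : eps V * (N + 1) = 1 := by
    rw [show eps V = (N + 1)⁻¹ from rfl]
    rw [inv_mul_cancel₀ (by positivity)]
  have h1 : (o : ℝ) + 1 ≤ (b : ℝ) := by exact_mod_cast hcount'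
  have h2 : (o : ℝ) + (b : ℝ) = (k : ℝ) := by exact_mod_cast hob
  have h3 : (k : ℝ) ≤ N := by rw [hN]; exact_mod_cast hkN
  have heps : 0 < eps V := eps_pos
  nlinarith [heps, hepsval, h1, h2, h3, hNnn]

lemma chain'_arc_ne {u v : V} (hO : IsPartialOrientation G O) (h : Arc G O u v) : u ≠ v :=
  (arc_adj hO h).ne

lemma cycle_pos (hO : IsSemiorientation G O) (a : V) (t : List V)
    (hnd : (a :: t).Nodup) (hch : List.Chain' (Arc G O) (a :: t))
    (hlast : Arc G O ((a :: t).getLast (by simp)) a) :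
    0 < wt G O (a :: t) + wgt G O ((a :: t).getLast (by simp)) a := by
  classical
  set L : List V := a :: t with hL
  set k : ℕ := L.length with hk
  have hk1 : 1 ≤ k := by simp [hk, hL]
  -- the closed list
  set M : List V := L ++ [a] with hM
  have hwtM : wt G O M = wt G O L + wgt G O (L.getLast (by simp)) a :=
    wt_append_singleton a L (by simp)
  have hMlen : M.length = k + 1 := by simp [hM, hk]
  have hchM : List.Chain' (Arc G O) M := by
    rw [hM, List.Chain', List.isChain_append]
    refine ⟨hch, List.isChain_singleton a, fun x hx y hy => ?_⟩
    simp only [List.head?_cons, Option.mem_def, Option.some.injEq] at hy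
    rw [List.getLast?_eq_getLast (l := L) (by simp)] at hx
    simp only [Option.mem_def, Option.some.injEq] at hx
    rw [← hx, ← hy]
    exact hlast
  rcases Nat.lt_or_ge k 3 with hklt | hkge
  · -- k = 1 or 2
    interval_cases k
    · -- k = 1 : t = []
      have ht : t = [] := by
        have := hk.symm
        simp only [hL, List.length_cons] at this
        exact List.eq_nil_of_length_eq_zero (by omega)
      subst ht
      simp only [List.getLast_singleton] at hlast
      exact absurd (arc_adj hO.1 hlast) G.irrefl
    · -- k = 2 : t = [b]
      obtain ⟨b, hb⟩ : ∃ b, t = [b] := by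
        have : t.length = 1 := by
          have := hk.symm
          simp only [hL, List.length_cons] at this
          omega
        match t, this with
        | [b], _ => exact ⟨b, rfl⟩
      subst hb
      have harc1 : Arc G O a b := by
        rw [hL, List.Chain', List.isChain_cons_cons] at hch
        exact hch.1
      have harc2 : Arc G O b a := by
        simpa [hL] using hlast
      have hnO1 : ¬ O a b := arc_not_rev hO.1 harc2
      have hnO2 : ¬ O b a := arc_not_rev hO.1 harc1
      have h1 : wgt G O a b = 1 - eps V := if_neg hnO1
      have h2 : wgt G O b a = 1 - eps V := if_neg hnO2
      have hlastval : (L.getLast (by simp)) = b := by simp [hL]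
      have hwt : wt G O L = wgt G O a b := by simp [hL, wt]
      rw [hwt, hlastval, h1, h2]
      have hepslt : eps V < 1 := by
        have hcard : 1 ≤ (Fintype.card V : ℝ) := by
          exact_mod_cast Fintype.card_pos_iff.mpr ⟨a⟩
        rw [show eps V = ((Fintype.card V : ℝ) + 1)⁻¹ from rfl]
        rw [inv_lt_one_iff₀]
        right
        linarith
      linarith
  · -- k ≥ 3
    haveI : NeZero k := ⟨by omega⟩
    set c : ZMod k → V := fun i => M.getD i.val a with hc
    have hgetD_mod : ∀ j : ℕ, j < k → M.getD ((j + 1) % k) a = M.getD (j + 1) a := by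
      intro j hj
      rcases Nat.lt_or_ge (j + 1) k with h | h
      · rw [Nat.mod_eq_of_lt h]
      · have hjk : j + 1 = k := by omega
        rw [hjk, Nat.mod_self]
        have h0 : M.getD 0 a = a := by simp [hM, hL]
        have hkk : M.getD k a = a := by
          rw [hM, List.getD_eq_getElem (l := L ++ [a]) (n := k) (d := a) (by simp only [List.length_append, List.length_singleton]; omega)]
          simp [hk]
        rw [h0, hkk]
    have hval : ∀ j : ℕ, j < k → ((j : ZMod k).val = j) := fun j hj => ZMod.val_cast_of_lt hj
    have hstep : ∀ j : ℕ, j < k → c j = M.getD j a ∧ c ((j : ZMod k) + 1) = M.getD (j + 1) a := by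
      intro j hj
      constructor
      · rw [hc]
        simp only
        rw [hval j hj]
      · rw [hc]
        simp only
        rw [show ((j : ZMod k) + 1) = ((j + 1 : ℕ) : ZMod k) by push_cast; ring]
        rw [ZMod.val_natCast]
        exact hgetD_mod j hj
    have hMget : ∀ j : ℕ, (hj : j < k) → Arc G O (M.getD j a) (M.getD (j + 1) a) := by
      intro j hj
      have h1 : j < M.length - 1 := by omega
      have := List.isChain_iff_getElem.mp hchM j (by omega)
      rwa [← List.getD_eq_getElem (d := a), ← List.getD_eq_getElem (d := a)] at this
    have harc : ∀ i : ZMod k, Arc G O (c i) (c (i + 1)) := by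
      intro i
      have hiv : i.val < k := ZMod.val_lt i
      have hcast : (i.val : ZMod k) = i := ZMod.natCast_rightInverse i
      obtain ⟨e1, e2⟩ := hstep i.val hiv
      rw [hcast] at e1 e2
      rw [e1, e2]
      exact hMget i.val hiv
    have hinj : Function.Injective c := by
      intro i j hij
      have hiv : i.val < k := ZMod.val_lt i
      have hjv : j.val < k := ZMod.val_lt j
      have hLi : M.getD i.val a = L.getD i.val a := List.getD_append _ _ _ _ (by omega)
      have hLj : M.getD j.val a = L.getD j.val a := List.getD_append _ _ _ _ (by omega)
      rw [hc] at hij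
      simp only at hij
      rw [hLi, hLj, List.getD_eq_getElem (l := L) (n := i.val) (d := a) (by omega), List.getD_eq_getElem (l := L) (n := j.val) (d := a) (by omega)] at hij
      have := (List.nodup_iff_injective_get.mp hnd)
        (show L.get ⟨i.val, by omega⟩ = L.get ⟨j.val, by omega⟩ by simpa using hij)
      have hvaleq : i.val = j.val := by simpa using congrArg Fin.val this
      calc i = (i.val : ZMod k) := (ZMod.natCast_rightInverse i).symm
        _ = (j.val : ZMod k) := by rw [hvaleq]
        _ = j := ZMod.natCast_rightInverse j
    have hpos := cycle_sum hO hkge c hinj harc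
    -- now identify the sum with wt M
    have hsum_eq : ∑ j ∈ Finset.range k, wgt G O (M.getD j a) (M.getD (j + 1) a) =
        ∑ i : ZMod k, wgt G O (c i) (c (i + 1)) := by
      refine Finset.sum_nbij' (fun j : ℕ => (j : ZMod k)) (fun i : ZMod k => i.val)
        (fun _ _ => Finset.mem_univ _) (fun i _ => Finset.mem_range.mpr (ZMod.val_lt i))
        (fun j hj => ZMod.val_cast_of_lt (Finset.mem_range.mp hj))
        (fun i _ => ZMod.natCast_rightInverse i) (fun j hj => ?_)
      obtain ⟨e1, e2⟩ := hstep j (Finset.mem_range.mp hj)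
      rw [e1, e2]
    have hwt_sum : wt G O M = ∑ j ∈ Finset.range k, wgt G O (M.getD j a) (M.getD (j + 1) a) := by
      rw [wt_getD a M, hMlen]
      simp
    rw [← hwtM, hwt_sum, hsum_eq]
    exact hpos



def IsPathTo (G : SimpleGraph V) (O : V → V → Prop) (v : V) (l : List V) : Prop :=
  l ≠ [] ∧ l.Nodup ∧ l.Chain' (Arc G O) ∧ l.getLast? = some v

noncomputable def PW (G : SimpleGraph V) (O : V → V → Prop) [Fintype V] (v : V) : Set ℝ :=
  insert 0 (wt G O '' {l | IsPathTo G O v l})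

lemma PW_finite (v : V) : (PW G O v).Finite := by
  refine Set.Finite.insert 0 (Set.Finite.subset
    ((List.finite_length_le V (Fintype.card V)).image (wt G O)) ?_)
  rintro _ ⟨l, hl, rfl⟩
  exact ⟨l, hl.2.1.length_le_card, rfl⟩

lemma exists_d (G : SimpleGraph V) (O : V → V → Prop) :
    ∃ d : V → ℝ, ∀ v, d v ∈ PW G O v ∧ ∀ c ∈ PW G O v, d v ≤ c := by
  have h : ∀ v : V, ∃ m, m ∈ PW G O v ∧ ∀ c ∈ PW G O v, m ≤ c := by
    intro v
    obtain ⟨m, hm, hmin⟩ := Set.exists_min_image (PW G O v) id (PW_finite v)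
      ⟨0, Set.mem_insert 0 _⟩
    exact ⟨m, hm, hmin⟩
  choose d hd using h
  exact ⟨d, hd⟩

lemma relax (hO : IsSemiorientation G O) {d : V → ℝ}
    (hd : ∀ v, d v ∈ PW G O v ∧ ∀ c ∈ PW G O v, d v ≤ c)
    {u v : V} (harc : Arc G O u v) : d v ≤ d u + wgt G O u v := by
  have hne : u ≠ v := (arc_adj hO.1 harc).ne
  rcases (hd u).1 with hdu0 | ⟨l, hl, hwl⟩
  · -- d u = 0 ; use the path [u, v]
    have hp : IsPathTo G O v [u, v] := by
      refine ⟨by simp, by simp [hne], ?_, by simp⟩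
      simp [List.Chain', List.isChain_cons_cons, harc]
    have hmem : wt G O [u, v] ∈ PW G O v := Set.mem_insert_iff.mpr (Or.inr ⟨_, hp, rfl⟩)
    have := (hd v).2 _ hmem
    have hwt : wt G O [u, v] = wgt G O u v := by simp [wt]
    rw [hwt] at this
    rw [hdu0]
    linarith
  · -- l is a minimal path to u
    obtain ⟨hlne, hlnd, hlch, hllast⟩ := hl
    have hlast_eq : l.getLast hlne = u := by
      rw [List.getLast?_eq_getLast hlne] at hllast
      exact Option.some_injective _ hllast
    by_cases hv : v ∈ l
    · obtain ⟨l₁, t, rfl⟩ := List.append_of_mem hv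
      have hnd1 : l₁.Nodup := (List.nodup_append'.mp hlnd).1
      have hnd2 : (v :: t).Nodup := (List.nodup_append'.mp hlnd).2.1
      have hdisj : l₁.Disjoint (v :: t) := (List.nodup_append'.mp hlnd).2.2
      have hvnl : v ∉ l₁ := fun h => hdisj h List.mem_cons_self
      have hp : IsPathTo G O v (l₁ ++ [v]) := by
        refine ⟨by simp, ?_, ?_, List.getLast?_concat⟩
        · exact List.Nodup.append hnd1 (List.nodup_singleton v)
            (fun x hx hx' => by simp at hx'; subst hx'; exact hvnl hx)
        · exact hlch.prefix ⟨t, by simp⟩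
      have hmem : wt G O (l₁ ++ [v]) ∈ PW G O v := Set.mem_insert_iff.mpr (Or.inr ⟨_, hp, rfl⟩)
      have hdv := (hd v).2 _ hmem
      have hglast : (v :: t).getLast (by simp) = u := by
        rw [← hlast_eq, List.getLast_append]
        simp
      have hcyc := cycle_pos hO v t hnd2 (hlch.suffix ⟨l₁, rfl⟩) (by rw [hglast]; exact harc)
      rw [hglast] at hcyc
      have hsplit : wt G O (l₁ ++ v :: t) = wt G O (l₁ ++ [v]) + wt G O (v :: t) :=
        wt_append_cons v t l₁
      rw [hsplit] at hwl
      linarith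
    · -- extend the path
      have hp : IsPathTo G O v (l ++ [v]) := by
        refine ⟨by simp, ?_, ?_, List.getLast?_concat⟩
        · exact List.Nodup.append hlnd (List.nodup_singleton v)
            (fun x hx hx' => by simp at hx'; subst hx'; exact hv hx)
        · rw [List.Chain', List.isChain_append]
          refine ⟨hlch, List.isChain_singleton v, fun x hx y hy => ?_⟩
          rw [List.getLast?_eq_getLast hlne] at hx
          simp only [Option.mem_def, Option.some.injEq] at hx hy
          simp only [List.head?_cons, Option.some.injEq] at hy
          rw [← hx, ← hy, hlast_eq]
          exact harc
      have hmem : wt G O (l ++ [v]) ∈ PW G O v := Set.mem_insert_iff.mpr (Or.inr ⟨_, hp, rfl⟩)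
      have hdv := (hd v).2 _ hmem
      rw [wt_append_singleton v l hlne, hlast_eq, hwl] at hdv
      exact hdv

lemma rho_nonempty (hO : IsSemiorientation G O) : (rho G O).Nonempty := by
  obtain ⟨d, hd⟩ := exists_d G O
  have heps : 0 < eps V := eps_pos
  refine ⟨fun v => -(d v), ?_, ?_⟩
  · intro u v hOuv
    have h := relax hO hd (Or.inl hOuv)
    rw [show wgt G O u v = -(1 + eps V) from if_pos hOuv] at h
    simp only [gt_iff_lt]
    linarith
  · intro u v hbl
    have h1 := relax hO hd (Or.inr hbl)
    have h2 := relax hO hd (Or.inr (blank_symm hbl))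
    rw [show wgt G O u v = 1 - eps V from if_neg hbl.2.1] at h1
    rw [show wgt G O v u = 1 - eps V from if_neg hbl.2.2] at h2
    rw [abs_lt]
    constructor <;> simp only [neg_sub_neg] <;> linarith

end Potential

end Aux

/-- The map `ρ` sending each `G`-semiorientation `O` to the set
`{x : x v - x u > 1 for (u,v) ∈ O, |x u - x v| < 1 for blank edges}` is a
well-defined bijection from the `G`-semiorientations onto the regions of the
`G`-semiorder arrangement. -/
theorem stmt3 {V : Type*} [Fintype V] (G : SimpleGraph V) (hconn : G.Connected) :
    Set.BijOn (rho G) {O : V → V → Prop | IsSemiorientation G O} (Regions G) := by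
  refine ⟨?_, ?_, ?_⟩
  · -- maps to
    intro O hO
    obtain ⟨x, hx⟩ := rho_nonempty hO
    have hxh : x ∉ hyperplanesUnion G := rho_subset_compl hO.1 hx
    have hOeq : O = Oof G x := eq_Oof hO.1 hx
    exact ⟨x, hxh, by rw [hOeq, rho_Oof_eq_component hxh]⟩
  · -- inj on
    intro O1 h1 O2 h2 heq
    obtain ⟨x, hx⟩ := rho_nonempty h1
    have hx2 : x ∈ rho G O2 := heq ▸ hx
    rw [eq_Oof h1.1 hx, eq_Oof h2.1 hx2]
  · -- surj on
    rintro r ⟨x, hxh, rfl⟩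
    exact ⟨Oof G x, semior_Oof hxh, rho_Oof_eq_component hxh⟩

end Soap
end

section
/- For every G-semiorientation O there exists a G-semiorder P on V that is compatible with O. -/
namespace Soap

variable {V : Type*} {W : Type*}

/-! ### Auxiliary machinery for `stmt6`: shortest-path potentials. -/

/-- Weight of a list of vertices: sum of `w` over consecutive pairs. -/
noncomputable def soapLwt (w : V → V → ℝ) : List V → ℝ
  | [] => 0
  | [_] => 0
  | a :: b :: l => w a b + soapLwt w (b :: l)

lemma soapLwt_single (w : V → V → ℝ) (a : V) : soapLwt w [a] = 0 := rfl

lemma soapLwt_cons_cons (w : V → V → ℝ) (a b : V) (l : List V) :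
    soapLwt w (a :: b :: l) = w a b + soapLwt w (b :: l) := rfl

lemma soapLwt_split (w : V → V → ℝ) (y : V) (ys : List V) :
    ∀ xs : List V, soapLwt w (xs ++ y :: ys) = soapLwt w (xs ++ [y]) + soapLwt w (y :: ys) := by
  intro xs
  induction xs with
  | nil => simp [soapLwt_single]
  | cons a xs ih =>
      cases xs with
      | nil => simp [soapLwt_cons_cons, soapLwt_single]
      | cons b xs' =>
          have h1 : (a :: b :: xs') ++ y :: ys = a :: b :: (xs' ++ y :: ys) := by simp
          have h2 : (a :: b :: xs') ++ [y] = a :: b :: (xs' ++ [y]) := by simp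
          rw [h1, h2, soapLwt_cons_cons, soapLwt_cons_cons]
          have h3 := ih
          simp only [List.cons_append] at h3
          rw [h3]
          ring

lemma soapLwt_eq_sum (w : V → V → ℝ) (z : V) :
    ∀ l : List V, soapLwt w l
      = ∑ i ∈ Finset.range (l.length - 1), w (l.getD i z) (l.getD (i+1) z) := by
  intro l
  induction l with
  | nil => simp [soapLwt]
  | cons a l ih =>
      cases l with
      | nil => simp [soapLwt_single]
      | cons b l' =>
          rw [soapLwt_cons_cons, ih]
          have hlen : (a :: b :: l').length - 1 = ((b :: l').length - 1) + 1 := by simp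
          rw [hlen, Finset.sum_range_succ']
          simp [List.getD_cons_succ]
          ring

/-- The set of `S`-paths (nodup chains) starting at `v`. -/
def soapPathsTo (S : V → V → Prop) (v : V) : Set (List V) :=
  {l | l.Chain' S ∧ l.Nodup ∧ l.head? = some v}

lemma soapPathsTo_finite [Fintype V] (S : V → V → Prop) (v : V) :
    (soapPathsTo S v).Finite :=
  (List.finite_length_le V (Fintype.card V)).subset fun _ hl => hl.2.1.length_le_card

lemma soapPathsTo_singleton (S : V → V → Prop) (v : V) : [v] ∈ soapPathsTo S v :=
  ⟨List.isChain_singleton v, List.nodup_singleton v, rfl⟩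

/-- Shortest-path potential. -/
noncomputable def soapD [Fintype V] (S : V → V → Prop) (ω : V → V → ℝ) (v : V) : ℝ :=
  sInf (soapLwt ω '' soapPathsTo S v)

lemma soapD_le [Fintype V] (S : V → V → Prop) (ω : V → V → ℝ) {v : V} {l : List V}
    (hl : l ∈ soapPathsTo S v) : soapD S ω v ≤ soapLwt ω l :=
  csInf_le ((soapPathsTo_finite S v).image _).bddBelow ⟨l, hl, rfl⟩

lemma soapD_mem [Fintype V] (S : V → V → Prop) (ω : V → V → ℝ) (v : V) :
    ∃ l ∈ soapPathsTo S v, soapLwt ω l = soapD S ω v := by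
  have hne : (soapLwt ω '' soapPathsTo S v).Nonempty :=
    ⟨_, ⟨[v], soapPathsTo_singleton S v, rfl⟩⟩
  obtain ⟨l, hl, hw⟩ := hne.csInf_mem ((soapPathsTo_finite S v).image _)
  exact ⟨l, hl, hw⟩

/-- Triangle inequality for the shortest-path potential, assuming positivity of closed walks. -/
lemma soapD_triangle [Fintype V] (S : V → V → Prop) (ω : V → V → ℝ)
    (hcyc : ∀ (m : List V) (u v : V), m.head? = some u → m.getLast? = some v →
      m.Nodup → m.Chain' S → S v u → 0 < soapLwt ω m + ω v u)
    {u v : V} (hS : S v u) : soapD S ω v ≤ soapD S ω u + ω v u := by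
  obtain ⟨l, hl, hw⟩ := soapD_mem S ω u
  obtain ⟨hchain, hnodup, hhead⟩ := hl
  by_cases hv : v ∈ l
  · obtain ⟨l₁, l₂, rfl⟩ := List.append_of_mem hv
    have hsuff : (v :: l₂) <:+ (l₁ ++ v :: l₂) := ⟨l₁, rfl⟩
    have hmem2 : (v :: l₂) ∈ soapPathsTo S v :=
      ⟨hchain.suffix hsuff, hnodup.sublist hsuff.sublist, rfl⟩
    have hpre : (l₁ ++ [v]) <+: (l₁ ++ v :: l₂) := ⟨l₂, by simp⟩
    have hhead' : (l₁ ++ [v]).head? = some u := by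
      cases l₁ with
      | nil => simpa using hhead
      | cons a l₁' => simpa using hhead
    have hlast' : (l₁ ++ [v]).getLast? = some v := by
      rw [List.getLast?_concat]
    have hpos : 0 < soapLwt ω (l₁ ++ [v]) + ω v u :=
      hcyc (l₁ ++ [v]) u v hhead' hlast' (hnodup.sublist hpre.sublist)
        (hchain.prefix hpre) hS
    have hsplit := soapLwt_split ω v l₂ l₁
    have h2 := soapD_le S ω hmem2
    rw [← hw]
    linarith
  · cases l with
    | nil => simp at hhead
    | cons a rest =>
        have hau : a = u := by simpa using hhead
        subst hau
        have hmem : (v :: a :: rest) ∈ soapPathsTo S v :=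
          ⟨List.isChain_cons_cons.mpr ⟨hS, hchain⟩, List.nodup_cons.mpr ⟨hv, hnodup⟩, rfl⟩
        have h2 := soapD_le S ω hmem
        rw [soapLwt_cons_cons] at h2
        rw [← hw]
        linarith

/-- For every `G`-semiorientation `O` there exists a `G`-semiorder `P` on `V`
compatible with `O`. -/
theorem stmt6 {V : Type*} [Fintype V] (G : SimpleGraph V) (hconn : G.Connected)
    (O : V → V → Prop) (hO : IsSemiorientation G O) :
    ∃ lt : V → V → Prop, IsSemiorder lt ∧ Compatible G lt O := by
  classical
  obtain ⟨hpo, hcycle⟩ := hO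
  set N : ℝ := (Fintype.card V : ℝ) with hNdef
  have hN0 : (0:ℝ) ≤ N := Nat.cast_nonneg _
  set ε : ℝ := 1 / (2 * (N + 1)) with hεdef
  have hεpos : 0 < ε := by rw [hεdef]; positivity
  have hεsmall : N * ε < 1 := by
    have h1 : N * ε = N / (2 * (N + 1)) := by rw [hεdef]; ring
    rw [h1, div_lt_one (by positivity)]
    linarith
  set S : V → V → Prop := fun a b => O a b ∨ IsBlank G O a b with hSdef
  set ω : V → V → ℝ := fun a b => if O a b then -(1+ε) else 1 with hωdef
  have hSadj : ∀ a b, S a b → G.Adj a b := by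
    rintro a b (h | h)
    exacts [(hpo a b h).1, h.1]
  have hSrev : ∀ a b, S a b → ¬ O b a := by
    rintro a b (h | h)
    exacts [(hpo a b h).2, h.2.2]
  -- every closed walk in the constraint digraph has positive weight
  have hcyc : ∀ (m : List V) (u v : V), m.head? = some u → m.getLast? = some v →
      m.Nodup → m.Chain' S → S v u → 0 < soapLwt ω m + ω v u := by
    intro m u v hhead hlast hnd hch hclose
    have hmne : m ≠ [] := by rintro rfl; simp at hhead
    have hlen1 : 1 ≤ m.length := List.length_pos_iff.mpr hmne
    rcases Nat.lt_or_ge m.length 3 with hsmall | hbig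
    · -- short cycles: length 1 (impossible) or 2 (two blank edges)
      interval_cases hL : m.length
      · -- length 1
        obtain ⟨a, rfl⟩ := List.length_eq_one_iff.mp hL
        have hua : a = u := by simpa using hhead
        have hva : a = v := by simpa using hlast
        subst hua
        subst hva  -- now u = v? careful
        exact absurd (hSadj _ _ hclose) (G.irrefl)
      · -- length 2
        obtain ⟨a, b, rfl⟩ := List.length_eq_two.mp hL
        have hua : a = u := by simpa using hhead
        have hvb : b = v := by simpa using hlast
        rw [← hua, ← hvb] at hclose
        have hsab : S a b := List.isChain_pair.mp hch
        have h1 : ¬ O a b := hSrev b a hclose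
        have h2 : ¬ O b a := hSrev a b hsab
        have e1 : soapLwt ω [a, b] = ω a b := by
          rw [soapLwt_cons_cons, soapLwt_single]; ring
        have e2 : ω a b = 1 := by rw [hωdef]; simp [h1]
        have e3 : ω b a = 1 := by rw [hωdef]; simp [h2]
        rw [← hua, ← hvb, e1, e2, e3]; norm_num
    · -- long cycles: use the semiorientation hypothesis
      set n := m.length with hn
      haveI : NeZero n := ⟨by omega⟩
      haveI : Fact (1 < n) := ⟨by omega⟩
      set c : ZMod n → V := fun i => m.get ⟨i.val, ZMod.val_lt i⟩ with hc
      have hinj : Function.Injective c := by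
        intro i j hij
        have h := List.nodup_iff_injective_get.mp hnd hij
        have hval : i.val = j.val := congrArg Fin.val h
        exact ZMod.val_injective n hval
      have hvaladd : ∀ i : ZMod n, (i + 1).val = (i.val + 1) % n := by
        intro i
        rw [ZMod.val_add, ZMod.val_one]
      have hu : m.get ⟨0, by omega⟩ = u := by
        cases m with
        | nil => simp at hhead
        | cons a l => simpa using hhead
      have hv : m.get ⟨n - 1, by omega⟩ = v := by
        have h := List.getLast?_eq_getLast_of_ne_nil (l := m) hmne
        rw [h] at hlast
        have h2 : m.getLast hmne = v := by simpa using hlast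
        rw [← h2, List.getLast_eq_getElem]
        simp [List.get_eq_getElem]
        rfl
      have key : ∀ i : ZMod n, S (c i) (c (i + 1)) := by
        intro i
        rcases Nat.lt_or_ge (i.val + 1) n with hlt | hge
        · have hvi : (i+1).val = i.val + 1 := by
            rw [hvaladd]; exact Nat.mod_eq_of_lt hlt
          have h2 : c (i+1) = m.get ⟨i.val + 1, by omega⟩ := by
            show m.get _ = m.get _
            congr 1
            exact Fin.ext hvi
          rw [h2]
          exact List.isChain_iff_getElem.mp hch i.val (by omega)
        · have hival : i.val = n - 1 := by
            have := ZMod.val_lt i; omega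
          have hvi : (i+1).val = 0 := by
            rw [hvaladd, hival, Nat.sub_add_cancel (by omega), Nat.mod_self]
          have h1 : c i = v := by
            have : c i = m.get ⟨n - 1, by omega⟩ := by
              show m.get _ = m.get _
              congr 1
              exact Fin.ext hival
            rw [this, hv]
          have h2 : c (i+1) = u := by
            have : c (i+1) = m.get ⟨0, by omega⟩ := by
              show m.get _ = m.get _
              congr 1
              exact Fin.ext hvi
            rw [this, hu]
          rw [h1, h2]
          exact hclose
      have hadj : ∀ i, G.Adj (c i) (c (i+1)) := fun i => hSadj _ _ (key i)
      have hnorev : ∀ i, ¬ O (c (i+1)) (c i) := fun i => hSrev _ _ (key i)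
      have hlt := hcycle n c (by omega) hinj hadj hnorev
      have hsetB : {i : ZMod n | IsBlank G O (c i) (c (i+1))}
          = {i : ZMod n | ¬ O (c i) (c (i+1))} := by
        ext i
        simp only [Set.mem_setOf_eq]
        constructor
        · exact fun h => h.2.1
        · intro h
          rcases key i with h' | h'
          · exact absurd h' h
          · exact h'
      rw [hsetB] at hlt
      have hcard1 : {i : ZMod n | O (c i) (c (i+1))}.ncard
          = (Finset.univ.filter (fun i : ZMod n => O (c i) (c (i+1)))).card := by
        rw [Set.ncard_eq_toFinset_card']
        congr 1
        ext i
        simp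
      have hcard2 : {i : ZMod n | ¬ O (c i) (c (i+1))}.ncard
          = (Finset.univ.filter (fun i : ZMod n => ¬ O (c i) (c (i+1)))).card := by
        rw [Set.ncard_eq_toFinset_card']
        congr 1
        ext i
        simp
      rw [hcard1, hcard2] at hlt
      set k := (Finset.univ.filter (fun i : ZMod n => O (c i) (c (i+1)))).card with hk
      set b := (Finset.univ.filter (fun i : ZMod n => ¬ O (c i) (c (i+1)))).card with hb
      have hkb : k + b = n := by
        rw [hk, hb, Finset.card_filter_add_card_filter_not]
        simp [ZMod.card]
      have hnN : (n : ℝ) ≤ N := by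
        rw [hNdef]
        have := Fintype.card_le_of_injective c hinj
        rw [ZMod.card] at this
        exact_mod_cast this
      -- rewrite the total weight as a sum over ZMod n
      have hzsum : ∀ f : ZMod n → ℝ, ∑ i : ZMod n, f i = ∑ j ∈ Finset.range n, f (j : ZMod n) := by
        intro f
        refine Finset.sum_nbij' (fun (a : ZMod n) => a.val) (fun (b : ℕ) => (b : ZMod n))
          ?_ ?_ ?_ ?_ ?_
        · intro a _; exact Finset.mem_range.mpr (ZMod.val_lt a)
        · intro a _; exact Finset.mem_univ _
        · intro a _; exact ZMod.natCast_rightInverse a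
        · intro a ha; exact ZMod.val_cast_of_lt (Finset.mem_range.mp ha)
        · intro a _
          rw [ZMod.natCast_rightInverse a]
      have htot : soapLwt ω m + ω v u = ∑ i : ZMod n, ω (c i) (c (i+1)) := by
        rw [hzsum, soapLwt_eq_sum ω u]
        have hnn : m.length - 1 = n - 1 := by omega
        rw [hnn]
        rw [show Finset.range n = Finset.range ((n-1)+1) by
          rw [Nat.sub_add_cancel (by omega)], Finset.sum_range_succ]
        have hlastterm : ω (c ((n-1 : ℕ) : ZMod n)) (c (((n-1 : ℕ) : ZMod n) + 1)) = ω v u := by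
          have hval : ((n-1 : ℕ) : ZMod n).val = n - 1 := ZMod.val_cast_of_lt (by omega)
          have e1 : c ((n-1 : ℕ) : ZMod n) = v := by
            have : c ((n-1 : ℕ) : ZMod n) = m.get ⟨n - 1, by omega⟩ := by
              show m.get _ = m.get _
              congr 1
              exact Fin.ext hval
            rw [this, hv]
          have hvi : (((n-1 : ℕ) : ZMod n) + 1).val = 0 := by
            rw [hvaladd, hval, Nat.sub_add_cancel (by omega), Nat.mod_self]
          have e2 : c (((n-1 : ℕ) : ZMod n) + 1) = u := by
            have : c (((n-1 : ℕ) : ZMod n) + 1) = m.get ⟨0, by omega⟩ := by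
              show m.get _ = m.get _
              congr 1
              exact Fin.ext hvi
            rw [this, hu]
          rw [e1, e2]
        rw [hlastterm]
        congr 1
        refine Finset.sum_congr rfl ?_
        intro j hj
        have hjlt : j < n - 1 := Finset.mem_range.mp hj
        have hval : ((j : ℕ) : ZMod n).val = j := ZMod.val_cast_of_lt (by omega)
        have hvi : (((j : ℕ) : ZMod n) + 1).val = j + 1 := by
          rw [hvaladd, hval]
          exact Nat.mod_eq_of_lt (by omega)
        have e1 : c ((j : ℕ) : ZMod n) = m.getD j u := by
          rw [List.getD_eq_getElem (hn := by omega)]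
          show m.get _ = _
          simp only [List.get_eq_getElem]
          congr 1
        have e2 : c (((j : ℕ) : ZMod n) + 1) = m.getD (j+1) u := by
          rw [List.getD_eq_getElem (hn := by omega)]
          show m.get _ = _
          simp only [List.get_eq_getElem]
          congr 1
        rw [e1, e2]
      -- compute the sum
      have hsum : ∑ i : ZMod n, ω (c i) (c (i+1))
          = (b : ℝ) * 1 + (k : ℝ) * (-(1+ε)) := by
        have : ∀ i : ZMod n, ω (c i) (c (i+1))
            = if O (c i) (c (i+1)) then -(1+ε) else 1 := by
          intro i; rw [hωdef]
        rw [Finset.sum_congr rfl (fun i _ => this i), Finset.sum_ite,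
          Finset.sum_const, Finset.sum_const]
        rw [← hk, ← hb]
        push_cast
        ring
      rw [htot, hsum]
      have hbk : (k : ℝ) + 1 ≤ (b : ℝ) := by exact_mod_cast hlt
      have hkn : (k : ℝ) ≤ (n : ℝ) := by
        have : k ≤ n := by omega
        exact_mod_cast this
      have hkε : (k : ℝ) * ε ≤ N * ε :=
        mul_le_mul_of_nonneg_right (le_trans hkn hnN) hεpos.le
      nlinarith
  -- the potential and the order
  set t : V → ℝ := soapD S ω with ht
  have tri : ∀ a b : V, S a b → t a ≤ t b + ω a b :=
    fun a b h => soapD_triangle S ω hcyc h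
  refine ⟨fun u v => t u + 1 < t v, ⟨t, fun u v => Iff.rfl⟩, ?_⟩
  intro u v hadj
  constructor
  · intro hlt
    by_contra hOuv
    by_cases hOvu : O v u
    · have h1 : t v ≤ t u + ω v u := tri v u (Or.inl hOvu)
      have h2 : ω v u = -(1+ε) := by rw [hωdef]; simp [hOvu]
      rw [h2] at h1
      linarith
    · have hbl : IsBlank G O u v := ⟨hadj, hOuv, hOvu⟩
      have h1 : t v ≤ t u + ω v u := tri v u (Or.inr ⟨hadj.symm, hOvu, hOuv⟩)
      have h2 : ω v u = 1 := by rw [hωdef]; simp [hOvu]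
      rw [h2] at h1
      linarith
  · intro hOuv
    have h1 : t u ≤ t v + ω u v := tri u v (Or.inl hOuv)
    have h2 : ω u v = -(1+ε) := by rw [hωdef]; simp [hOuv]
    rw [h2] at h1
    linarith

end Soap
end

section
/- For every quasi-superstable divisor c on G there exists a G-semiorientation O such that c(v) = indeg_O(v) - 1 for every vertex v; that is, the map ψ : O ↦ (v ↦ indeg_O(v) - 1) from G-semiorientations to quasi-superstable divisors is surjective. -/
namespace Soap

variable {V : Type*} {W : Type*}

/-! ### Auxiliary lemmas -/

open Finset in
/-- Discrete IVT: counts of elements `≤ x` hit every value between the count at `m`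
and `T.card`, at a threshold which is `m` or an element of `T`. -/
lemma exists_threshold (T : Finset ℝ) (a : ℕ) :
    ∀ m : ℝ, (T.filter (· ≤ m)).card ≤ a → a ≤ T.card →
    ∃ x, m ≤ x ∧ (x = m ∨ x ∈ T) ∧ (T.filter (· ≤ x)).card = a := by
  classical
  suffices H : ∀ k : ℕ, ∀ m : ℝ, a - (T.filter (· ≤ m)).card ≤ k →
      (T.filter (· ≤ m)).card ≤ a → a ≤ T.card →
      ∃ x, m ≤ x ∧ (x = m ∨ x ∈ T) ∧ (T.filter (· ≤ x)).card = a by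
    intro m h1 h2; exact H _ m le_rfl h1 h2
  intro k
  induction k with
  | zero =>
    intro m hk h1 h2
    exact ⟨m, le_rfl, Or.inl rfl, le_antisymm h1 (by omega)⟩
  | succ k ih =>
    intro m hk h1 h2
    rcases eq_or_lt_of_le h1 with heq | hlt
    · exact ⟨m, le_rfl, Or.inl rfl, heq⟩
    · -- there is an element of T above m
      have hne : (T.filter (fun y => m < y)).Nonempty := by
        by_contra h
        rw [Finset.not_nonempty_iff_eq_empty] at h
        have : T.filter (· ≤ m) = T := by
          apply Finset.filter_true_of_mem
          intro y hy
          by_contra hy'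
          exact (Finset.eq_empty_iff_forall_notMem.mp h y)
            (Finset.mem_filter.mpr ⟨hy, lt_of_not_ge hy'⟩)
        rw [this] at hlt
        omega
      set x₀ := (T.filter (fun y => m < y)).min' hne with hx₀
      have hx₀mem := (T.filter (fun y => m < y)).min'_mem hne
      rw [Finset.mem_filter] at hx₀mem
      have hstep : T.filter (· ≤ x₀) = insert x₀ (T.filter (· ≤ m)) := by
        ext y
        simp only [Finset.mem_filter, Finset.mem_insert]
        constructor
        · rintro ⟨hyT, hy⟩
          rcases le_or_gt y m with h | h
          · exact Or.inr ⟨hyT, h⟩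
          · left
            refine le_antisymm hy ?_
            exact (T.filter (fun y => m < y)).min'_le y (Finset.mem_filter.mpr ⟨hyT, h⟩)
        · rintro (rfl | ⟨hyT, hy⟩)
          · exact ⟨hx₀mem.1, le_rfl⟩
          · exact ⟨hyT, hy.trans hx₀mem.2.le⟩
      have hnotmem : x₀ ∉ T.filter (· ≤ m) := by
        simp only [Finset.mem_filter, not_and, not_le]
        intro _; exact hx₀mem.2
      have hcard : (T.filter (· ≤ x₀)).card = (T.filter (· ≤ m)).card + 1 := by
        rw [hstep, Finset.card_insert_of_notMem hnotmem]
      obtain ⟨x, hx1, hx2, hx3⟩ := ih x₀ (by omega) (by omega) h2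
      refine ⟨x, hx₀mem.2.le.trans hx1, ?_, hx3⟩
      rcases hx2 with rfl | hx2
      · exact Or.inr hx₀mem.1
      · exact Or.inr hx2


open Finset in
lemma place {V : Type*} [Fintype V] [DecidableEq V] (G : SimpleGraph V) [DecidableRel G.Adj]
    (a : V → ℕ)
    (hDhar : ∀ S : Finset V, S.Nonempty →
      ∃ v ∈ S, a v ≤ ((Sᶜ).filter (fun u => G.Adj u v)).card) :
    ∃ t : V → ℝ, ∀ w, ((univ.filter (fun u => G.Adj u w ∧ t u + 1 < t w)).card = a w) := by
  classical
  suffices H : ∀ (n : ℕ) (S : Finset V) (t : V → ℝ) (m : ℝ), S.card = n →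
      (∀ w ∉ S, t w ≤ m) →
      (Set.InjOn t ↑(Sᶜ)) →
      (∀ w ∉ S, ((Sᶜ).filter (fun u => G.Adj u w ∧ t u + 1 < t w)).card = a w) →
      (∀ v ∈ S, ((Sᶜ).filter (fun u => G.Adj u v ∧ t u + 1 ≤ m)).card ≤ a v) →
      ∃ t' : V → ℝ, ∀ w, ((univ.filter (fun u => G.Adj u w ∧ t' u + 1 < t' w)).card = a w) by
    obtain ⟨t', ht'⟩ := H (univ : Finset V).card univ (fun _ => 0) 0 rfl
      (by simp) (by simp [Set.injOn_empty]) (by simp) (by simp)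
    exact ⟨t', ht'⟩
  intro n
  induction n with
  | zero =>
    intro S t m hcard _ _ hC _
    have hS : S = ∅ := Finset.card_eq_zero.mp hcard
    subst hS
    refine ⟨t, fun w => ?_⟩
    have := hC w (Finset.notMem_empty w)
    simpa using this
  | succ n ih =>
    intro S t m hcard hA hB hC hD
    have hSne : S.Nonempty := Finset.card_pos.mp (by omega)
    -- the image of placed neighbor thresholds
    set T : V → Finset ℝ :=
      fun v => ((Sᶜ).filter (fun u => G.Adj u v)).image (fun u => t u + 1) with hT
    have hinj : Set.InjOn (fun u => t u + 1) ↑(Sᶜ) := by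
      intro u1 h1 u2 h2 h
      exact hB h1 h2 (by simpa using h)
    have himgLe : ∀ (v : V) (b : ℝ),
        ((T v).filter (fun y => y ≤ b)).card
          = ((Sᶜ).filter (fun u => G.Adj u v ∧ t u + 1 ≤ b)).card := by
      intro v b
      rw [hT]
      rw [Finset.filter_image]
      rw [Finset.card_image_of_injOn (hinj.mono (by
        intro u hu
        simp only [Finset.coe_filter, Set.mem_setOf_eq] at hu ⊢
        simp only [Finset.mem_coe, Finset.mem_filter] at hu ⊢
        exact hu.1.1))]
      congr 1
      rw [Finset.filter_filter]
    have hTcard : ∀ v, (T v).card = ((Sᶜ).filter (fun u => G.Adj u v)).card := by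
      intro v
      rw [hT]
      exact Finset.card_image_of_injOn (hinj.mono (by
        intro u hu
        simp only [Finset.mem_coe, Finset.mem_filter] at hu ⊢
        exact hu.1))
    have hTsub : ∀ v, T v ⊆ (Sᶜ).image (fun u => t u + 1) := by
      intro v
      exact Finset.image_subset_image (Finset.filter_subset _ _)
    -- candidate thresholds
    set C : Finset ℝ := insert m ((Sᶜ).image (fun u => t u + 1)) with hCdef
    set P : Finset ℝ :=
      C.filter (fun x => m ≤ x ∧ ∃ v ∈ S, ((T v).filter (· ≤ x)).card = a v) with hP
    have hPne : P.Nonempty := by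
      obtain ⟨v₀, hv₀S, hv₀⟩ := hDhar S hSne
      have h1 : ((T v₀).filter (· ≤ m)).card ≤ a v₀ := by
        rw [himgLe]
        exact hD v₀ hv₀S
      have h2 : a v₀ ≤ (T v₀).card := by rw [hTcard]; exact hv₀
      obtain ⟨x, hx1, hx2, hx3⟩ := exists_threshold (T v₀) (a v₀) m h1 h2
      refine ⟨x, Finset.mem_filter.mpr ⟨?_, hx1, v₀, hv₀S, hx3⟩⟩
      rcases hx2 with rfl | hx2
      · exact Finset.mem_insert_self _ _
      · exact Finset.mem_insert_of_mem (hTsub v₀ hx2)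
    set B : ℝ := P.min' hPne with hBdef
    have hBmem : B ∈ P := P.min'_mem hPne
    obtain ⟨hBC, hmB, vstar, hvS, hvcount⟩ := Finset.mem_filter.mp hBmem
    -- key claim: counts at threshold B stay below a
    have hkey : ∀ v ∈ S, ((T v).filter (· ≤ B)).card ≤ a v := by
      intro v hv
      by_contra hcon
      push_neg at hcon
      have h1 : ((T v).filter (· ≤ m)).card ≤ a v := by
        rw [himgLe]; exact hD v hv
      have h2 : a v ≤ (T v).card :=
        le_trans hcon.le (Finset.card_le_card (Finset.filter_subset _ _))
      obtain ⟨x, hx1, hx2, hx3⟩ := exists_threshold (T v) (a v) m h1 h2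
      have hxB : x ≤ B := by
        by_contra hxB
        push_neg at hxB
        have hsub : ((T v).filter (fun y => y ≤ B)).card ≤ ((T v).filter (fun y => y ≤ x)).card := by
          apply Finset.card_le_card
          intro y hy
          rw [Finset.mem_filter] at hy ⊢
          exact ⟨hy.1, le_trans hy.2 hxB.le⟩
        omega
      have hxP : x ∈ P := by
        refine Finset.mem_filter.mpr ⟨?_, hx1, v, hv, hx3⟩
        rcases hx2 with rfl | hx2
        · exact Finset.mem_insert_self _ _
        · exact Finset.mem_insert_of_mem (hTsub v hx2)
      have : B ≤ x := P.min'_le x hxP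
      have hxB' : x = B := le_antisymm hxB this
      rw [hxB'] at hx3
      omega
    -- the new value
    set J : Finset ℝ := ((Sᶜ).image (fun u => t u + 1)).filter (fun y => B < y) with hJ
    set x₁ : ℝ := if h : J.Nonempty then (B + J.min' h)/2 else B + 1 with hx₁
    have hBx : B < x₁ := by
      rw [hx₁]
      by_cases h : J.Nonempty
      · rw [dif_pos h]
        have h2 := (Finset.mem_filter.mp (J.min'_mem h)).2
        linarith
      · rw [dif_neg h]
        linarith
    have hthresh : ∀ u ∈ Sᶜ, ((t u + 1 ≤ x₁) ↔ (t u + 1 ≤ B)) ∧ ((t u + 1 < x₁) ↔ (t u + 1 ≤ B)) := by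
      intro u hu
      have hmem : t u + 1 ∈ (Sᶜ).image (fun u => t u + 1) := Finset.mem_image_of_mem _ hu
      have key : t u + 1 ≤ x₁ → t u + 1 ≤ B := by
        intro h
        by_contra h'
        push_neg at h'
        have hJmem : t u + 1 ∈ J := Finset.mem_filter.mpr ⟨hmem, h'⟩
        have hJne : J.Nonempty := ⟨_, hJmem⟩
        have hmin : J.min' hJne ≤ t u + 1 := J.min'_le _ hJmem
        have hminB : B < J.min' hJne := (Finset.mem_filter.mp (J.min'_mem hJne)).2
        rw [hx₁] at h
        rw [dif_pos hJne] at h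
        linarith
      exact ⟨⟨key, fun h => le_trans h hBx.le⟩,
        ⟨fun h => key h.le, fun h => lt_of_le_of_lt h hBx⟩⟩
    -- new data
    set t' : V → ℝ := Function.update t vstar x₁ with ht'
    set S' : Finset V := S.erase vstar with hS'
    have hS'compl : (S'ᶜ : Finset V) = insert vstar (Sᶜ) := by
      rw [hS']
      ext u
      simp [Finset.mem_erase, Finset.mem_insert, Finset.mem_compl]
    have ht'eq : ∀ u ∈ Sᶜ, t' u = t u := by
      intro u hu
      rw [ht', Function.update_of_ne]
      intro h
      rw [h] at hu
      exact (Finset.mem_compl.mp hu) hvS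
    have htum : ∀ u ∈ Sᶜ, t u ≤ m := fun u hu => hA u (Finset.mem_compl.mp hu)
    -- apply induction hypothesis
    apply ih S' t' x₁ (by rw [hS', Finset.card_erase_of_mem hvS, hcard]; omega)
    · -- A'
      intro w hw
      rw [← Finset.mem_compl, hS'compl, Finset.mem_insert] at hw
      rcases hw with rfl | hw
      · rw [ht', Function.update_self]
      · rw [ht'eq w hw]
        exact le_trans (htum w hw) (le_trans hmB hBx.le)
    · -- B'
      rw [hS'compl]
      intro u1 h1 u2 h2 heq
      simp only [Finset.coe_insert, Set.mem_insert_iff, Finset.mem_coe] at h1 h2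
      rcases h1 with rfl | h1 <;> rcases h2 with rfl | h2
      · rfl
      · rw [ht', Function.update_self, Function.update_of_ne (by rintro rfl; exact (Finset.mem_compl.mp h2) hvS)] at heq
        have := htum u2 h2
        linarith [le_trans this (le_trans hmB hBx.le), hBx]
      · rw [ht', Function.update_self, Function.update_of_ne (by rintro rfl; exact (Finset.mem_compl.mp h1) hvS)] at heq
        have := htum u1 h1
        exfalso
        have h3 : t u1 ≤ B := le_trans this hmB
        linarith
      · rw [ht'eq u1 h1, ht'eq u2 h2] at heq
        exact hB h1 h2 heq
    · -- C'
      intro w hw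
      rw [← Finset.mem_compl, hS'compl, Finset.mem_insert] at hw
      rw [hS'compl]
      rcases hw with rfl | hw
      · -- w = vstar
        rw [Finset.filter_insert, if_neg (by simp [G.irrefl (v := w)])]
        have : (Sᶜ).filter (fun u => G.Adj u w ∧ t' u + 1 < t' w)
            = (Sᶜ).filter (fun u => G.Adj u w ∧ t u + 1 ≤ B) := by
          apply Finset.filter_congr
          intro u hu
          rw [ht'eq u hu, ht', Function.update_self]
          simp only [and_congr_right_iff]
          intro _
          exact (hthresh u hu).2
        rw [this, ← himgLe w B]
        exact hvcount
      · -- w previously placed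
        have hne : w ≠ vstar := by
          rintro rfl
          exact (Finset.mem_compl.mp hw) hvS
        rw [Finset.filter_insert, if_neg (by
          simp only [ht', Function.update_self, Function.update_of_ne hne]
          simp only [not_and, not_lt]
          intro _
          have h1 : t w ≤ m := htum w hw
          linarith)]
        rw [show (Sᶜ).filter (fun u => G.Adj u w ∧ t' u + 1 < t' w)
            = (Sᶜ).filter (fun u => G.Adj u w ∧ t u + 1 < t w) from
          Finset.filter_congr (by
            intro u hu
            rw [ht'eq u hu, ht'eq w hw])]
        exact hC w (Finset.mem_compl.mp hw)
    · -- D'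
      intro v hv
      rw [hS'compl]
      have hvS'' : v ∈ S := Finset.mem_of_mem_erase hv
      have hvne : v ≠ vstar := Finset.ne_of_mem_erase hv
      rw [Finset.filter_insert, if_neg (by
        rw [ht', Function.update_self]
        simp only [not_and, not_le]
        intro _
        linarith)]
      rw [show (Sᶜ).filter (fun u => G.Adj u v ∧ t' u + 1 ≤ x₁)
          = (Sᶜ).filter (fun u => G.Adj u v ∧ t u + 1 ≤ B) from
        Finset.filter_congr (by
          intro u hu
          rw [ht'eq u hu]
          simp only [and_congr_right_iff]
          intro _
          exact (hthresh u hu).1)]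
      rw [← himgLe v B]
      exact hkey v hvS''


open Finset in
lemma semiorder_semiorientation (G : SimpleGraph V) (t : V → ℝ) :
    IsSemiorientation G (fun u v => G.Adj u v ∧ t u + 1 < t v) := by
  classical
  constructor
  · intro u v ⟨hadj, hlt⟩
    refine ⟨hadj, ?_⟩
    rintro ⟨-, hlt'⟩
    linarith
  · intro n c hn hinj hadj hback
    haveI : NeZero n := ⟨by omega⟩
    set O : V → V → Prop := fun u v => G.Adj u v ∧ t u + 1 < t v with hO
    have hncardK : {i : ZMod n | O (c i) (c (i + 1))}.ncard
        = (univ.filter (fun i : ZMod n => O (c i) (c (i + 1)))).card := by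
      rw [Set.ncard_eq_toFinset_card']
      congr 1
      ext i
      simp
    have hncardB : {i : ZMod n | IsBlank G O (c i) (c (i + 1))}.ncard
        = (univ.filter (fun i : ZMod n => IsBlank G O (c i) (c (i + 1)))).card := by
      rw [Set.ncard_eq_toFinset_card']
      congr 1
      ext i
      simp
    rw [hncardK, hncardB]
    set K : Finset (ZMod n) := univ.filter (fun i => O (c i) (c (i + 1))) with hK
    set Bl : Finset (ZMod n) := univ.filter (fun i => IsBlank G O (c i) (c (i + 1))) with hBl
    -- the steps
    set d : ZMod n → ℝ := fun i => t (c (i + 1)) - t (c i) with hd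
    have hsum : ∑ i : ZMod n, d i = 0 := by
      have h1 : ∑ i : ZMod n, t (c (i + 1)) = ∑ i : ZMod n, t (c i) :=
        Fintype.sum_bijective (fun i => i + 1)
          (Equiv.addRight (1 : ZMod n)).bijective _ _ (fun i => rfl)
      simp only [hd, Finset.sum_sub_distrib, h1, sub_self]
    have hdisj : Disjoint K Bl := by
      rw [Finset.disjoint_filter]
      intro i _ hi
      exact fun hBl' => hBl'.2.1 hi
    have hunion : K ∪ Bl = univ := by
      apply Finset.eq_univ_of_forall
      intro i
      rw [Finset.mem_union, hK, hBl, Finset.mem_filter, Finset.mem_filter]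
      by_cases h : O (c i) (c (i + 1))
      · exact Or.inl ⟨Finset.mem_univ _, h⟩
      · exact Or.inr ⟨Finset.mem_univ _, hadj i, h, hback i⟩
    have hKd : ∀ i ∈ K, 1 < d i := by
      intro i hi
      have := (Finset.mem_filter.mp hi).2.2
      rw [hd]
      simp only
      linarith
    have hBd : ∀ i ∈ Bl, -1 ≤ d i := by
      intro i hi
      have h2 := (Finset.mem_filter.mp hi).2.2.2
      rw [hO] at h2
      simp only [not_and, not_lt] at h2
      have := h2 ((hadj i).symm)
      rw [hd]
      simp only
      linarith
    have hsplit : ∑ i ∈ K, d i + ∑ i ∈ Bl, d i = 0 := by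
      rw [← Finset.sum_union hdisj, hunion]
      exact hsum
    rcases Finset.eq_empty_or_nonempty K with hKe | hKne
    · rw [hKe]
      simp only [Finset.card_empty]
      have : Bl = univ := by rw [← hunion, hKe, Finset.empty_union]
      rw [this]
      simp only [Finset.card_univ, ZMod.card]
      omega
    · have h1 : (K.card : ℝ) < ∑ i ∈ K, d i := by
        calc (K.card : ℝ) = ∑ _i ∈ K, (1 : ℝ) := by rw [Finset.sum_const, nsmul_eq_mul, mul_one]
        _ < ∑ i ∈ K, d i := Finset.sum_lt_sum_of_nonempty hKne hKd
      have h2 : -(Bl.card : ℝ) ≤ ∑ i ∈ Bl, d i := by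
        calc -(Bl.card : ℝ) = ∑ _i ∈ Bl, (-1 : ℝ) := by
              rw [Finset.sum_const, nsmul_eq_mul, mul_neg_one]
        _ ≤ ∑ i ∈ Bl, d i := Finset.sum_le_sum hBd
      have : (K.card : ℝ) < (Bl.card : ℝ) := by linarith
      exact_mod_cast this


open Finset in
lemma KG_adj_some_some (G : SimpleGraph V) (u v : V) :
    (KG G).Adj (some u) (some v) ↔ G.Adj u v := by
  constructor
  · rintro ⟨-, h⟩
    exact h u v rfl rfl
  · intro h
    exact ⟨by simpa using h.ne, fun a b ha hb => by
      cases Option.some_injective _ ha; cases Option.some_injective _ hb; exact h⟩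

lemma KG_adj_some_none (G : SimpleGraph V) (u : V) :
    (KG G).Adj (some u) none := by
  exact ⟨by simp, fun a b _ hb => by cases hb⟩

open Finset in
lemma dhar {V : Type*} [Fintype V] (G : SimpleGraph V) [DecidableRel G.Adj] [DecidableEq V]
    (c : V → ℤ) (hc : QuasiSuperstable G c) (S : Finset V) (hS : S.Nonempty) :
    ∃ v ∈ S, c v + 1 ≤ (((Sᶜ).filter (fun u => G.Adj u v)).card : ℤ) := by
  classical
  obtain ⟨hpos, hfire⟩ := hc
  by_contra hcon
  push_neg at hcon
  apply hfire
  refine ⟨some '' (↑S : Set V), ⟨some hS.choose, ⟨hS.choose, by simpa using hS.choose_spec⟩⟩,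
    by simp, ?_⟩
  rintro (_ | v₀) hv
  · exact absurd rfl hv
  clear hv
  -- characterize the neighbor set of `some v₀` in `KG G`
  have hset : {u : Option V | (KG G).Adj (some v₀) u}
      = insert none (some '' {u : V | G.Adj v₀ u}) := by
    ext (_ | u)
    · simp only [Set.mem_setOf_eq, Set.mem_insert_iff]
      constructor
      · intro _; exact Or.inl trivial
      · intro _; exact KG_adj_some_none G v₀
    · simp only [Set.mem_setOf_eq, Set.mem_insert_iff, KG_adj_some_some]
      constructor
      · intro h; exact Or.inr ⟨u, h, rfl⟩
      · rintro (h | ⟨w, hw, hw2⟩)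
        · cases h
        · cases Option.some_injective _ hw2; exact hw
  have hdeg : (vdeg (KG G) (some v₀) : ℤ)
      = ((univ.filter (fun u => G.Adj v₀ u)).card : ℤ) + 1 := by
    unfold vdeg
    rw [hset]
    rw [Set.ncard_insert_of_notMem (by simp) (Set.Finite.image _ (Set.toFinite _))]
    rw [Set.ncard_image_of_injective _ (Option.some_injective V)]
    have : {u : V | G.Adj v₀ u} = ↑(univ.filter (fun u => G.Adj v₀ u)) := by
      ext u; simp
    rw [this, Set.ncard_coe_finset]
    push_cast
    ring
  have hXcount : ({u : Option V | u ∈ some '' (↑S : Set V) ∧ (KG G).Adj (some v₀) u}.ncard : ℤ)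
      = ((S.filter (fun u => G.Adj v₀ u)).card : ℤ) := by
    have : {u : Option V | u ∈ some '' (↑S : Set V) ∧ (KG G).Adj (some v₀) u}
        = some '' ↑(S.filter (fun u => G.Adj v₀ u)) := by
      ext (_ | u)
      · simp
      · simp only [Set.mem_setOf_eq, Set.mem_image, Finset.coe_filter, Finset.mem_coe,
          Set.mem_setOf_eq, KG_adj_some_some]
        constructor
        · rintro ⟨⟨w, hw, hw2⟩, h2⟩
          cases Option.some_injective _ hw2
          exact ⟨u, ⟨hw, h2⟩, rfl⟩
        · rintro ⟨w, ⟨hw1, hw2⟩, hw3⟩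
          cases Option.some_injective _ hw3
          exact ⟨⟨u, hw1, rfl⟩, hw2⟩
    rw [this, Set.ncard_image_of_injective _ (Option.some_injective V),
      Set.ncard_coe_finset]
  simp only [Option.elim]
  by_cases hv₀ : v₀ ∈ S
  · rw [Set.indicator_of_mem (by exact ⟨v₀, by simpa using hv₀, rfl⟩)]
    rw [hdeg, hXcount]
    have hsplit : (univ.filter (fun u => G.Adj v₀ u)).card
        = (S.filter (fun u => G.Adj v₀ u)).card + ((Sᶜ).filter (fun u => G.Adj v₀ u)).card := by
      rw [← Finset.card_union_of_disjoint (by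
        apply Finset.disjoint_filter_filter
        exact disjoint_compl_right)]
      congr 1
      rw [← Finset.filter_union, Finset.union_compl]
    have hcv := hcon v₀ hv₀
    have hadjsym : (Sᶜ).filter (fun u => G.Adj u v₀) = (Sᶜ).filter (fun u => G.Adj v₀ u) := by
      apply Finset.filter_congr
      intro u _
      constructor
      · exact fun h => h.symm
      · exact fun h => h.symm
    rw [hadjsym] at hcv
    rw [hsplit]
    push_cast
    omega
  · rw [Set.indicator_of_notMem (by
      rintro ⟨w, hw, hw2⟩
      cases Option.some_injective _ hw2
      exact hv₀ (by simpa using hw))]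
    have h1 : 0 ≤ c v₀ + 1 := hpos (some v₀) (by simp)
    have h2 : (0 : ℤ) ≤ ({u : Option V | u ∈ some '' (↑S : Set V) ∧ (KG G).Adj (some v₀) u}.ncard : ℤ) := by
      positivity
    omega


/-- For every quasi-superstable divisor `c` on `G` there exists a `G`-semiorientation
`O` with `c v = indeg_O v - 1` for every vertex `v`; i.e. the map
`ψ : O ↦ (v ↦ indeg_O v - 1)` onto quasi-superstable divisors is surjective. -/
theorem stmt7 {V : Type*} [Fintype V] (G : SimpleGraph V) (hconn : G.Connected)
    (c : V → ℤ) (hc : QuasiSuperstable G c) :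
    ∃ O : V → V → Prop, IsSemiorientation G O ∧ ∀ v, c v = (indeg O v : ℤ) - 1 := by
  classical
  haveI : DecidableEq V := Classical.decEq V
  haveI : DecidableRel G.Adj := Classical.decRel _
  set a : V → ℕ := fun v => (c v + 1).toNat with ha
  have hpos : ∀ v, 0 ≤ c v + 1 := fun v => hc.1 (some v) (by simp)
  have hDhar : ∀ S : Finset V, S.Nonempty →
      ∃ v ∈ S, a v ≤ ((Sᶜ).filter (fun u => G.Adj u v)).card := by
    intro S hS
    obtain ⟨v, hv, hle⟩ := dhar G c hc S hS
    exact ⟨v, hv, by rw [ha]; exact Int.toNat_le.mpr hle⟩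
  obtain ⟨t, ht⟩ := place G a hDhar
  refine ⟨fun u v => G.Adj u v ∧ t u + 1 < t v, semiorder_semiorientation G t, ?_⟩
  intro v
  have hind : indeg (fun u v => G.Adj u v ∧ t u + 1 < t v) v = a v := by
    unfold indeg
    rw [Set.ncard_eq_toFinset_card']
    rw [← ht v]
    congr 1
    ext u
    simp
  rw [hind, ha]
  have := hpos v
  simp only []
  omega

end Soap
end

section
/- For every quasi-superstable divisor c on G there exists a G-semiorder P on V such that c(v) = n_P(v) - 1 for every vertex v; that is, the map θ : P ↦ (v ↦ n_P(v) - 1) from G-semiorders to quasi-superstable divisors is surjective. -/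
namespace Soap

variable {V : Type*} {W : Type*}

section Stmt8Aux
open Finset
open scoped Classical
set_option linter.unusedSectionVars false

variable [Fintype V]

lemma aux_div_le {σ a b : ℤ} (hσ : 0 < σ) (ha : σ ∣ a) (hb : σ ∣ b)
    (h : a < b + σ) : a ≤ b := by
  obtain ⟨x, rfl⟩ := ha
  obtain ⟨y, rfl⟩ := hb
  have hx : x < y + 1 := by
    have := (mul_lt_mul_iff_right₀ hσ).mp (by linarith : σ * x < σ * (y + 1))
    exact this
  have : x ≤ y := by omega
  exact mul_le_mul_of_nonneg_left this hσ.le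

lemma aux_kth (t : V → ℤ) :
    ∀ (m : ℕ) (B : Finset V), B.card = m →
    (∀ u ∈ B, ∀ u' ∈ B, t u = t u' → u = u') →
    ∀ k, 1 ≤ k → k ≤ B.card →
    ∃ u₀ ∈ B, (B.filter fun u => t u ≤ t u₀).card = k := by
  intro m
  induction m with
  | zero => intro B hB _ k hk1 hk; omega
  | succ m ih =>
    intro B hB hinj k hk1 hk
    have hne : B.Nonempty := by
      rw [← Finset.card_pos]; omega
    obtain ⟨m₀, hm₀, hmax⟩ := B.exists_max_image t hne
    by_cases hkB : k = B.card
    · refine ⟨m₀, hm₀, ?_⟩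
      rw [Finset.filter_true_of_mem (fun u hu => hmax u hu), hkB]
    · have hkB' : k ≤ m := by omega
      set B' := B.erase m₀ with hB'
      have hcard' : B'.card = m := by
        rw [hB', Finset.card_erase_of_mem hm₀, hB]; omega
      obtain ⟨u₀, hu₀, hcnt⟩ := ih B' hcard'
        (fun u hu u' hu' he => hinj u (Finset.mem_of_mem_erase hu) u'
          (Finset.mem_of_mem_erase hu') he) k hk1 (by omega)
      refine ⟨u₀, Finset.mem_of_mem_erase hu₀, ?_⟩
      have hfe : B.filter (fun u => t u ≤ t u₀) = B'.filter (fun u => t u ≤ t u₀) := by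
        apply Finset.Subset.antisymm
        · intro u hu
          rw [Finset.mem_filter] at hu ⊢
          refine ⟨Finset.mem_erase.mpr ⟨?_, hu.1⟩, hu.2⟩
          rintro rfl
          have h1 : t u₀ ≤ t u := hmax u₀ (Finset.mem_of_mem_erase hu₀)
          have h2 : u = u₀ := hinj u hu.1 u₀ (Finset.mem_of_mem_erase hu₀)
            (le_antisymm hu.2 h1)
          exact (Finset.notMem_erase u₀ B) (h2 ▸ hu₀)
        · exact Finset.filter_subset_filter _ (Finset.erase_subset _ _)
      rw [hfe, hcnt]

/-- The invariant state for the greedy construction. -/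
structure GS (G : SimpleGraph V) (h : V → ℕ) (n : ℕ)
    (A : Finset V) (t : V → ℤ) (M : ℤ) : Prop where
  mem : ∃ u ∈ A, t u = M
  le : ∀ u ∈ A, t u ≤ M
  inj : ∀ u ∈ A, ∀ u' ∈ A, t u = t u' → u = u'
  dvd : ∀ u ∈ A, ((2:ℤ)^(n - A.card)) ∣ t u
  count : ∀ v ∈ A, (A.filter (fun u => G.Adj u v ∧ t u + 2^n < t v)).card = h v
  slack : ∀ w, w ∉ A →
    (A.filter (fun u => G.Adj u w ∧ t u + 2^n < M + 2^(n - A.card))).card ≤ h w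

lemma step (G : SimpleGraph V) (h : V → ℕ) (n : ℕ)
    {A : Finset V} {t : V → ℤ} {M : ℤ} (hGS : GS G h n A t M)
    (hcard : A.card < n)
    (hF : ∃ v, v ∉ A ∧ h v ≤ (A.filter (fun u => G.Adj u v)).card) :
    ∃ A' t' M', GS G h n A' t' M' ∧ A'.card = A.card + 1 := by
  set i := A.card with hi
  set σ : ℤ := 2^(n - i - 1) with hσdef
  have hσ : 0 < σ := by positivity
  have h2σ : (2:ℤ)^(n - i) = 2*σ := by
    rw [hσdef, ← pow_succ']
    congr 1
    omega
  have hσ2n : σ ≤ (2:ℤ)^n := pow_le_pow_right₀ (by norm_num) (by omega)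
  have hdvd1 : σ ∣ (2:ℤ)^n := pow_dvd_pow 2 (by omega)
  have hdvdt : ∀ u ∈ A, σ ∣ t u := by
    intro u hu
    have hσ2 : σ ∣ (2:ℤ)^(n-i) := ⟨2, by rw [h2σ]; ring⟩
    exact hσ2.trans (hGS.dvd u hu)
  have hdvdt2 : ∀ u ∈ A, (2*σ) ∣ t u := by
    intro u hu; rw [← h2σ]; exact hGS.dvd u hu
  have hdvdM : σ ∣ M := by
    obtain ⟨u, hu, hut⟩ := hGS.mem; exact hut ▸ hdvdt u hu
  set Cs : Finset ℤ := insert (M + σ) (A.image fun u => t u + 2^n + σ) with hCs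
  set cnt : V → ℤ → ℕ :=
    fun w x => (A.filter fun u => G.Adj u w ∧ t u + 2^n < x).card with hcntdef
  have hmono : ∀ w, ∀ x y : ℤ, x ≤ y → cnt w x ≤ cnt w y := by
    intro w x y hxy
    apply Finset.card_le_card
    apply Finset.monotone_filter_right
    intro u _ hu
    exact ⟨hu.1, by linarith [hu.2]⟩
  have hslack' : ∀ w, w ∉ A → cnt w (M + 2*σ) ≤ h w := by
    intro w hw
    have := hGS.slack w hw
    rw [h2σ] at this
    exact this
  -- validity of the candidate value for a vertex with h w = 0
  have hvalid0 : ∀ w, w ∉ A → h w = 0 →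
      (M + σ) ∈ Cs ∧ M < M + σ ∧ cnt w (M + σ) = h w := by
    intro w hw hw0
    refine ⟨Finset.mem_insert_self _ _, by linarith, ?_⟩
    have := le_trans (hmono w (M + σ) (M + 2*σ) (by linarith)) (hslack' w hw)
    omega
  -- validity of the candidate value built from the k-th smallest neighbour
  have hvalidk : ∀ w, w ∉ A → ∀ u₀, u₀ ∈ A.filter (fun u => G.Adj u w) →
      ((A.filter (fun u => G.Adj u w)).filter (fun u => t u ≤ t u₀)).card = h w →
      (max (t u₀ + 2^n) M + σ) ∈ Cs ∧ M < max (t u₀ + 2^n) M + σ ∧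
        cnt w (max (t u₀ + 2^n) M + σ) = h w := by
    intro w hw u₀ hu₀B hcount
    have hBA : A.filter (fun u => G.Adj u w) ⊆ A := Finset.filter_subset _ _
    have hu₀A : u₀ ∈ A := hBA hu₀B
    rcases le_total M (t u₀ + 2^n) with hM | hM
    · rw [max_eq_left hM]
      refine ⟨Finset.mem_insert_of_mem (Finset.mem_image.mpr ⟨u₀, hu₀A, rfl⟩),
        by linarith, ?_⟩
      show (A.filter fun u => G.Adj u w ∧ t u + 2^n < t u₀ + 2^n + σ).card = h w
      rw [← Finset.filter_filter, ← hcount]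
      apply congrArg
      apply Finset.filter_congr
      intro u hu
      have huA : u ∈ A := hBA hu
      constructor
      · intro hlt
        exact aux_div_le hσ (hdvdt u huA) (hdvdt u₀ hu₀A)
          (by linarith : t u < t u₀ + σ)
      · intro hle
        linarith
    · rw [max_eq_right hM]
      refine ⟨Finset.mem_insert_self _ _, by linarith, ?_⟩
      apply le_antisymm
      · exact le_trans (hmono w (M + σ) (M + 2*σ) (by linarith)) (hslack' w hw)
      · rw [← hcount]
        show _ ≤ (A.filter fun u => G.Adj u w ∧ t u + 2^n < M + σ).card
        rw [← Finset.filter_filter]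
        apply Finset.card_le_card
        apply Finset.monotone_filter_right
        intro u _ hu
        linarith
  -- existence of a valid candidate value for any feasible vertex
  have hexists : ∀ w, w ∉ A → h w ≤ (A.filter (fun u => G.Adj u w)).card →
      ∃ x ∈ Cs, M < x ∧ cnt w x = h w := by
    intro w hw hdw
    by_cases hw0 : h w = 0
    · obtain ⟨h1, h2, h3⟩ := hvalid0 w hw hw0
      exact ⟨M + σ, h1, h2, h3⟩
    · have hinjB : ∀ u ∈ A.filter (fun u => G.Adj u w),
          ∀ u' ∈ A.filter (fun u => G.Adj u w), t u = t u' → u = u' :=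
        fun u hu u' hu' he => hGS.inj u (Finset.filter_subset _ _ hu) u'
          (Finset.filter_subset _ _ hu') he
      obtain ⟨u₀, hu₀, hcnt₀⟩ := aux_kth t _ _ rfl hinjB (h w) (by omega) hdw
      obtain ⟨h1, h2, h3⟩ := hvalidk w hw u₀ hu₀ hcnt₀
      exact ⟨_, h1, h2, h3⟩
  -- the selection of (v, x)
  set T := (univ.filter (fun w => w ∉ A ∧ h w ≤ (A.filter (fun u => G.Adj u w)).card)).biUnion
    (fun w => Cs.filter (fun x => M < x ∧ cnt w x = h w)) with hTdef
  have hTne : T.Nonempty := by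
    obtain ⟨v₁, hv₁, hd₁⟩ := hF
    obtain ⟨x, hx1, hx2, hx3⟩ := hexists v₁ hv₁ hd₁
    exact ⟨x, Finset.mem_biUnion.mpr ⟨v₁,
      Finset.mem_filter.mpr ⟨Finset.mem_univ _, hv₁, hd₁⟩,
      Finset.mem_filter.mpr ⟨hx1, hx2, hx3⟩⟩⟩
  set x := T.min' hTne with hxdef
  have hxT : x ∈ T := T.min'_mem hTne
  obtain ⟨v, hvF, hxv⟩ := Finset.mem_biUnion.mp hxT
  rw [Finset.mem_filter] at hvF
  obtain ⟨-, hvA, hvd⟩ := hvF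
  rw [Finset.mem_filter] at hxv
  obtain ⟨hxC, hxM, hxcnt⟩ := hxv
  have hmin : ∀ w, w ∉ A → h w ≤ (A.filter (fun u => G.Adj u w)).card →
      ∀ y, y ∈ Cs → M < y → cnt w y = h w → x ≤ y := by
    intro w hw hdw y hy1 hy2 hy3
    exact T.min'_le y (Finset.mem_biUnion.mpr ⟨w,
      Finset.mem_filter.mpr ⟨Finset.mem_univ _, hw, hdw⟩,
      Finset.mem_filter.mpr ⟨hy1, hy2, hy3⟩⟩)
  have hdvdx : σ ∣ x := by
    rcases Finset.mem_insert.mp hxC with he | hm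
    · rw [he]; exact dvd_add hdvdM dvd_rfl
    · obtain ⟨u, hu, he⟩ := Finset.mem_image.mp hm
      rw [← he]
      exact dvd_add (dvd_add (hdvdt u hu) hdvd1) dvd_rfl
  have h2npos : (0:ℤ) < 2^n := by positivity
  -- the new state
  have hcA' : (insert v A).card = i + 1 := Finset.card_insert_of_notMem hvA
  have hexp : n - (i+1) = n - i - 1 := by omega
  have htA : ∀ u ∈ A, Function.update t v x u = t u := by
    intro u hu
    exact Function.update_of_ne (fun he => hvA (by rw [← he]; exact hu)) _ _
  have ht'v : Function.update t v x v = x := Function.update_self _ _ _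
  refine ⟨insert v A, Function.update t v x, x, ?_, hcA'⟩
  constructor
  · exact ⟨v, Finset.mem_insert_self _ _, ht'v⟩
  · intro u hu
    rcases Finset.mem_insert.mp hu with rfl | huA
    · rw [ht'v]
    · rw [htA u huA]; exact le_trans (hGS.le u huA) hxM.le
  · intro u hu u' hu' he
    rcases Finset.mem_insert.mp hu with rfl | huA <;>
      rcases Finset.mem_insert.mp hu' with rfl | huA'
    · rfl
    · rw [ht'v, htA u' huA'] at he
      have := hGS.le u' huA'
      omega
    · rw [ht'v, htA u huA] at he
      have := hGS.le u huA
      omega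
    · rw [htA u huA, htA u' huA'] at he
      exact hGS.inj u huA u' huA' he
  · intro u hu
    rw [hcA', hexp, ← hσdef]
    rcases Finset.mem_insert.mp hu with rfl | huA
    · rw [ht'v]; exact hdvdx
    · rw [htA u huA]; exact hdvdt u huA
  · intro p hp
    rcases Finset.mem_insert.mp hp with rfl | hpA
    · rw [Finset.filter_insert, if_neg (fun hcond => G.irrefl hcond.1)]
      have hfe : (A.filter (fun u => G.Adj u p ∧
          Function.update t p x u + 2^n < Function.update t p x p)) =
          A.filter (fun u => G.Adj u p ∧ t u + 2^n < x) :=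
        Finset.filter_congr (fun u hu => by rw [htA u hu, ht'v])
      rw [hfe]
      exact hxcnt
    · rw [Finset.filter_insert, if_neg]
      · have hfe : (A.filter (fun u => G.Adj u p ∧
            Function.update t v x u + 2^n < Function.update t v x p)) =
            A.filter (fun u => G.Adj u p ∧ t u + 2^n < t p) :=
          Finset.filter_congr (fun u hu => by rw [htA u hu, htA p hpA])
        rw [hfe]
        exact hGS.count p hpA
      · intro hcond
        rw [ht'v, htA p hpA] at hcond
        have := hGS.le p hpA
        have := hcond.2
        linarith
  · intro w hw
    have hwv : w ≠ v := fun he => hw (he ▸ Finset.mem_insert_self _ _)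
    have hwA : w ∉ A := fun he => hw (Finset.mem_insert_of_mem he)
    rw [hcA', hexp, ← hσdef, Finset.filter_insert, if_neg]
    swap
    · intro hcond
      rw [ht'v] at hcond
      have := hcond.2
      linarith
    have hfe : (A.filter (fun u => G.Adj u w ∧
        Function.update t v x u + 2^n < x + σ)) =
        A.filter (fun u => G.Adj u w ∧ t u + 2^n < x + σ) :=
      Finset.filter_congr (fun u hu => by rw [htA u hu])
    rw [hfe]
    show cnt w (x + σ) ≤ h w
    by_contra hbad
    push_neg at hbad
    have hinjB : ∀ u ∈ A.filter (fun u => G.Adj u w),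
        ∀ u' ∈ A.filter (fun u => G.Adj u w), t u = t u' → u = u' :=
      fun u hu u' hu' he => hGS.inj u (Finset.filter_subset _ _ hu) u'
        (Finset.filter_subset _ _ hu') he
    have hCeq : A.filter (fun u => G.Adj u w ∧ t u + 2^n < x + σ) =
        (A.filter (fun u => G.Adj u w)).filter (fun u => t u + 2^n < x + σ) :=
      (Finset.filter_filter _ _ _).symm
    have hCcard : h w + 1 ≤ ((A.filter (fun u => G.Adj u w)).filter
        (fun u => t u + 2^n < x + σ)).card := by
      have : cnt w (x + σ) = ((A.filter (fun u => G.Adj u w)).filter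
          (fun u => t u + 2^n < x + σ)).card := by
        show (A.filter (fun u => G.Adj u w ∧ t u + 2^n < x + σ)).card = _
        rw [hCeq]
      omega
    have hdw : h w + 1 ≤ (A.filter (fun u => G.Adj u w)).card :=
      le_trans hCcard (Finset.card_le_card (Finset.filter_subset _ _))
    by_cases hxe : x = M + σ
    · have h1 := hslack' w hwA
      have h2 : cnt w (x + σ) = cnt w (M + 2*σ) := by
        rw [hxe]; ring_nf
      omega
    · have hxgt : M + σ < x := by
        have h1 : σ ≤ x - M := Int.le_of_dvd (by linarith) (dvd_sub hdvdx hdvdM)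
        have h2 : x - M ≠ σ := fun he => hxe (by linarith)
        omega
      by_cases hw0 : h w = 0
      · obtain ⟨hy1, hy2, hy3⟩ := hvalid0 w hwA hw0
        have := hmin w hwA (by omega) (M + σ) hy1 hy2 hy3
        omega
      · obtain ⟨u₀, hu₀, hcnt₀⟩ := aux_kth t _ _ rfl hinjB (h w) (by omega) (by omega)
        have hinjC : ∀ u ∈ (A.filter (fun u => G.Adj u w)).filter
              (fun u => t u + 2^n < x + σ),
            ∀ u' ∈ (A.filter (fun u => G.Adj u w)).filter
              (fun u => t u + 2^n < x + σ), t u = t u' → u = u' :=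
          fun u hu u' hu' he => hinjB u (Finset.filter_subset _ _ hu) u'
            (Finset.filter_subset _ _ hu') he
        obtain ⟨u₁, hu₁, hcnt₁⟩ := aux_kth t _ _ rfl hinjC (h w + 1) (by omega) hCcard
        have hu₁B : u₁ ∈ A.filter (fun u => G.Adj u w) := Finset.filter_subset _ _ hu₁
        have hu₁A : u₁ ∈ A := Finset.filter_subset _ _ hu₁B
        have hu₀A : u₀ ∈ A := Finset.filter_subset _ _ hu₀
        have hord : t u₀ < t u₁ := by
          by_contra hle
          push_neg at hle
          have hsub : ((A.filter (fun u => G.Adj u w)).filter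
              (fun u => t u + 2^n < x + σ)).filter (fun u => t u ≤ t u₁) ⊆
              (A.filter (fun u => G.Adj u w)).filter (fun u => t u ≤ t u₀) := by
            intro u hu
            rw [Finset.mem_filter] at hu ⊢
            exact ⟨Finset.filter_subset _ _ hu.1, le_trans hu.2 hle⟩
          have := Finset.card_le_card hsub
          omega
        have hu₁x : t u₁ + 2^n ≤ x := by
          have hu₁mem := Finset.mem_filter.mp hu₁
          exact aux_div_le hσ (dvd_add (hdvdt u₁ hu₁A) hdvd1) hdvdx hu₁mem.2
        have hu₀u₁ : t u₀ ≤ t u₁ - 2*σ := by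
          refine aux_div_le (by linarith : (0:ℤ) < 2*σ) (hdvdt2 u₀ hu₀A) ?_ (by linarith)
          exact dvd_sub (hdvdt2 u₁ hu₁A) dvd_rfl
        obtain ⟨hy1, hy2, hy3⟩ := hvalidk w hwA u₀ hu₀ hcnt₀
        have hxley := hmin w hwA (by omega) _ hy1 hy2 hy3
        have hlt : max (t u₀ + 2^n) M + σ < x := by
          rcases max_cases (t u₀ + 2^n) M with ⟨hm, _⟩ | ⟨hm, _⟩ <;> rw [hm] <;> linarith
        linarith

lemma base (G : SimpleGraph V) (h : V → ℕ) (n : ℕ) (hn : 1 ≤ n)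
    (v₀ : V) (hv₀ : h v₀ = 0) :
    GS G h n {v₀} (fun _ => 0) 0 := by
  constructor
  · exact ⟨v₀, Finset.mem_singleton_self _, rfl⟩
  · intro u _; exact le_rfl
  · intro u hu u' hu' _
    rw [Finset.mem_singleton] at hu hu'
    rw [hu, hu']
  · intro u _; exact dvd_zero _
  · intro v hv
    rw [Finset.mem_singleton] at hv
    subst hv
    rw [Finset.filter_singleton, if_neg (fun hc => G.irrefl hc.1)]
    simp [hv₀]
  · intro w _
    rw [Finset.filter_singleton, if_neg]
    · simp
    · intro hc
      have h1 : (2:ℤ)^(n - ({v₀} : Finset V).card) ≤ 2^n :=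
        pow_le_pow_right₀ (by norm_num) (by omega)
      have := hc.2
      linarith

lemma build (G : SimpleGraph V) (h : V → ℕ) (n : ℕ) (hn : n = Fintype.card V)
    (hP : ∀ S : Finset V, S.Nonempty → ∃ v ∈ S,
      h v ≤ (univ.filter (fun u => u ∉ S ∧ G.Adj u v)).card) :
    ∀ k, 1 ≤ k → k ≤ n → ∃ A t M, GS G h n A t M ∧ A.card = k := by
  intro k
  induction k with
  | zero => omega
  | succ k ih =>
    intro hk1 hkn
    by_cases hk0 : k = 0
    · subst hk0
      have hne : (univ : Finset V).Nonempty := by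
        rw [← Finset.card_pos, Finset.card_univ]
        omega
      obtain ⟨v₀, _, hv₀⟩ := hP univ hne
      have hv₀0 : h v₀ = 0 := by
        have : (univ.filter (fun u => u ∉ (univ : Finset V) ∧ G.Adj u v₀)) = ∅ := by
          ext u; simp
        rw [this] at hv₀
        simpa using hv₀
      exact ⟨{v₀}, fun _ => 0, 0, base G h n (by omega) v₀ hv₀0,
        Finset.card_singleton _⟩
    · obtain ⟨A, t, M, hGS, hcard⟩ := ih (by omega) (by omega)
      have hA : A.card < n := by omega
      have hF : ∃ v, v ∉ A ∧ h v ≤ (A.filter (fun u => G.Adj u v)).card := by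
        have hne : (Aᶜ : Finset V).Nonempty := by
          rw [← Finset.card_pos, Finset.card_compl, ← hn]
          omega
        obtain ⟨v, hv, hvc⟩ := hP Aᶜ hne
        refine ⟨v, Finset.mem_compl.mp hv, ?_⟩
        have hSe : univ.filter (fun u => u ∉ (Aᶜ : Finset V) ∧ G.Adj u v) =
            A.filter (fun u => G.Adj u v) := by
          ext u
          simp [Finset.mem_compl]
        rw [hSe] at hvc
        exact hvc
      obtain ⟨A', t', M', hGS', hcard'⟩ := step G h n hGS hA hF
      exact ⟨A', t', M', hGS', by omega⟩


lemma extractP (G : SimpleGraph V) (c : V → ℤ) (hc : QuasiSuperstable G c) :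
    (∀ v : V, 0 ≤ c v + 1) ∧
    ∀ S : Finset V, S.Nonempty → ∃ v ∈ S,
      (c v + 1).toNat ≤ (univ.filter (fun u => u ∉ S ∧ G.Adj u v)).card := by
  obtain ⟨hpos, hfire⟩ := hc
  have hcpos : ∀ v : V, 0 ≤ c v + 1 := by
    intro v
    have := hpos (some v) (by simp)
    simpa using this
  refine ⟨hcpos, ?_⟩
  intro S hS
  by_contra hcon
  push_neg at hcon
  apply hfire
  refine ⟨Option.some '' (S : Set V), ?_, ?_, ?_⟩
  · obtain ⟨s, hs⟩ := hS
    exact ⟨some s, ⟨s, by simpa using hs, rfl⟩⟩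
  · simp
  · intro y hy
    match y, hy with
    | some v', _ =>
    -- the neighbourhood of `some v'` in `KG G`
    have hadj : ∀ u : V, (KG G).Adj (some v') (some u) ↔ G.Adj v' u := by
      intro u
      constructor
      · intro hyp
        exact hyp.2 v' u rfl rfl
      · intro hyp
        exact ⟨by simpa using hyp.ne, fun a b ha hb => by
          simp only [Option.some.injEq] at ha hb
          rw [← ha, ← hb]; exact hyp⟩
    have hadjn : (KG G).Adj (some v') none := by
      refine ⟨by simp, fun a b _ hb => by simp at hb⟩
    have hset : {u : Option V | (KG G).Adj (some v') u} =
        insert none (Option.some '' {u | G.Adj v' u}) := by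
      ext y
      cases y with
      | none => simp [hadjn]
      | some u =>
        simp only [Set.mem_setOf_eq, hadj, Set.mem_insert_iff, Set.mem_image]
        constructor
        · intro hyp; exact Or.inr ⟨u, hyp, rfl⟩
        · rintro (hyp | ⟨a, ha, he⟩)
          · exact absurd hyp (by simp)
          · simp only [Option.some.injEq] at he
            rw [← he]; exact ha
    have hdeg : vdeg (KG G) (some v') = (univ.filter (fun u => G.Adj v' u)).card + 1 := by
      show ({u : Option V | (KG G).Adj (some v') u}).ncard = _
      rw [hset, Set.ncard_insert_of_notMem (by simp) (Set.toFinite _),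
        Set.ncard_image_of_injective _ (Option.some_injective V)]
      have he : {u | G.Adj v' u} = ↑(univ.filter (fun u => G.Adj v' u)) := by
        ext u; simp
      rw [he, Set.ncard_coe_finset]
    have hXset : {u : Option V | u ∈ Option.some '' (S : Set V) ∧ (KG G).Adj (some v') u} =
        Option.some '' {u | u ∈ S ∧ G.Adj v' u} := by
      ext y
      cases y with
      | none =>
        simp only [Set.mem_setOf_eq, Set.mem_image]
        constructor
        · rintro ⟨⟨a, _, ha⟩, -⟩; exact absurd ha (by simp)
        · rintro ⟨a, _, ha⟩; exact absurd ha (by simp)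
      | some u =>
        simp only [Set.mem_setOf_eq, Set.mem_image, Option.some.injEq, hadj,
          Finset.mem_coe]
        constructor
        · rintro ⟨⟨a, haS, rfl⟩, hyp⟩
          exact ⟨a, ⟨haS, hyp⟩, rfl⟩
        · rintro ⟨a, ⟨haS, hyp⟩, rfl⟩
          exact ⟨⟨a, haS, rfl⟩, hyp⟩
    have hXcard : ({u : Option V | u ∈ Option.some '' (S : Set V) ∧
        (KG G).Adj (some v') u}).ncard = (S.filter (fun u => G.Adj v' u)).card := by
      rw [hXset, Set.ncard_image_of_injective _ (Option.some_injective V)]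
      have he : {u | u ∈ S ∧ G.Adj v' u} = ↑(S.filter (fun u => G.Adj v' u)) := by
        ext u; simp
      rw [he, Set.ncard_coe_finset]
    by_cases hvS : v' ∈ S
    · -- v' is in the fired set
      have hind : (Option.some '' (S : Set V)).indicator
          (fun u => (vdeg (KG G) u : ℤ)) (some v') = (vdeg (KG G) (some v') : ℤ) :=
        Set.indicator_of_mem (Set.mem_image_of_mem _ (by simpa using hvS)) _
      have helim : (fun (x : Option V) => x.elim 0 (fun v => c v + 1)) (some v') = c v' + 1 := rfl
      rw [helim, hind, hdeg, hXcard]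
      -- counting: split the neighbours of v' into those in S and those not in S
      have hsplit : (univ.filter (fun u => G.Adj v' u)).card =
          (S.filter (fun u => G.Adj v' u)).card +
          (univ.filter (fun u => u ∉ S ∧ G.Adj u v')).card := by
        have h1 := Finset.card_filter_add_card_filter_not
          (s := univ.filter (fun u => G.Adj v' u)) (p := fun u => u ∈ S)
        have h2 : (univ.filter (fun u => G.Adj v' u)).filter (fun u => u ∈ S) =
            S.filter (fun u => G.Adj v' u) := by
          ext u; simp [and_comm]
        have h3 : (univ.filter (fun u => G.Adj v' u)).filter (fun u => ¬ u ∈ S) =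
            univ.filter (fun u => u ∉ S ∧ G.Adj u v') := by
          ext u
          simp only [Finset.mem_filter, Finset.mem_univ, true_and]
          rw [G.adj_comm]
          tauto
        rw [h2, h3] at h1
        omega
      have hc1 := hcon v' hvS
      have hc2 := hcpos v'
      omega
    · -- v' is not in the fired set
      have hind : (Option.some '' (S : Set V)).indicator
          (fun u => (vdeg (KG G) u : ℤ)) (some v') = 0 := by
        apply Set.indicator_of_notMem
        rintro ⟨a, haS, hae⟩
        simp only [Option.some.injEq] at hae
        rw [hae] at haS
        exact hvS (by exact_mod_cast haS)
      have helim : (fun (x : Option V) => x.elim 0 (fun v => c v + 1)) (some v') = c v' + 1 := rfl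
      rw [helim, hind]
      have hc2 := hcpos v'
      have : (0:ℤ) ≤ ({u : Option V | u ∈ Option.some '' (S : Set V) ∧
          (KG G).Adj (some v') u}).ncard := Int.natCast_nonneg _
      omega


end Stmt8Aux

/-- For every quasi-superstable divisor `c` on `G` there exists a `G`-semiorder `P`
with `c v = n_P(v) - 1` for every vertex `v`; i.e. the map
`θ : P ↦ (v ↦ n_P(v) - 1)` onto quasi-superstable divisors is surjective. -/
theorem stmt8 {V : Type*} [Fintype V] (G : SimpleGraph V) (hconn : G.Connected)
    (c : V → ℤ) (hc : QuasiSuperstable G c) :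
    ∃ lt : V → V → Prop, IsSemiorder lt ∧ ∀ v, c v = (nP G lt v : ℤ) - 1 := by
  classical
  obtain ⟨hcpos, hP⟩ := extractP G c hc
  have hnV : Nonempty V := hconn.nonempty
  set n := Fintype.card V with hn
  have hn1 : 1 ≤ n := Fintype.card_pos
  obtain ⟨A, t, M, hGS, hcard⟩ :=
    build G (fun v => (c v + 1).toNat) n hn hP n hn1 le_rfl
  have hA : A = Finset.univ := Finset.eq_univ_of_card A (by rw [hcard])
  subst hA
  refine ⟨fun u v => (t u : ℝ)/2^n + 1 < (t v : ℝ)/2^n,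
    ⟨fun v => (t v : ℝ)/2^n, fun u v => Iff.rfl⟩, ?_⟩
  intro v
  have h2 : (0:ℝ) < 2^n := by positivity
  have hne0 : ((2:ℝ)^n) ≠ 0 := ne_of_gt h2
  have hiff : ∀ u w : V, ((t u : ℝ)/2^n + 1 < (t w : ℝ)/2^n) ↔ (t u + 2^n < t w) := by
    intro u w
    constructor
    · intro hlt
      have h1 := mul_lt_mul_of_pos_right hlt h2
      rw [add_mul, div_mul_cancel₀ _ hne0, one_mul, div_mul_cancel₀ _ hne0] at h1
      exact_mod_cast h1
    · intro hlt
      have h1 : (t u : ℝ) + 2^n < (t w : ℝ) := by exact_mod_cast hlt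
      have h3 := mul_lt_mul_of_pos_right h1 (inv_pos.mpr h2)
      rw [add_mul, mul_inv_cancel₀ hne0] at h3
      rw [div_eq_mul_inv, div_eq_mul_inv]
      linarith
  have hsetE : {u | ((t u : ℝ)/2^n + 1 < (t v : ℝ)/2^n) ∧ G.Adj u v} =
      ↑(Finset.univ.filter (fun u => G.Adj u v ∧ t u + 2^n < t v)) := by
    ext u
    simp only [Set.mem_setOf_eq, Finset.coe_filter, Finset.mem_univ, true_and,
      hiff u v]
    tauto
  have hnP : nP G (fun u w => (t u : ℝ)/2^n + 1 < (t w : ℝ)/2^n) v =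
      (Finset.univ.filter (fun u => G.Adj u v ∧ t u + 2^n < t v)).card := by
    show ({u | ((t u : ℝ)/2^n + 1 < (t v : ℝ)/2^n) ∧ G.Adj u v}).ncard = _
    rw [hsetE, Set.ncard_coe_finset]
  rw [hnP, hGS.count v (Finset.mem_univ v)]
  have := hcpos v
  omega

end Soap
end

section
/- For every quasi-superstable divisor c on G there exists a region r of the G-semiorder arrangement such that for every point x ∈ r and every vertex v, c(v) equals the number of vertices u with {u,v} ∈ E and x(v) > x(u) + 1, minus 1. Hence the Pak-Stanley labeling map from regions of the G-semiorder arrangement to quasi-superstable divisors is surjective. -/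
namespace Soap

variable {V : Type*} {W : Type*}

open Finset
open scoped Classical

section Aux
variable {V : Type*}

lemma filter_eq_filter {α} (p : α → Prop) (h1 h2 : DecidablePred p) (s : Finset α) :
    @Finset.filter α p h1 s = @Finset.filter α p h2 s := by
  rw [Subsingleton.elim h1 h2]

lemma ncard_fin [Fintype V] (p : V → Prop) :
    {u | p u}.ncard = (univ.filter p).card := by
  rw [Set.ncard_eq_toFinset_card']; simp

/-- interval of thresholds with exactly e elements of A below -/
lemma exists_interval (A : Finset ℝ) (hA : ∀ a ∈ A, a ∈ Set.Ioo (0:ℝ) 1) :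
    ∀ e : ℕ, e ≤ A.card →
    ∃ lo hi : ℝ, 0 ≤ lo ∧ lo < hi ∧ hi ≤ 1 ∧
      ∀ r ∈ Set.Ioo lo hi, (A.filter (· < r)).card = e := by
  intro e
  induction e with
  | zero =>
    intro _
    by_cases h : A.Nonempty
    · refine ⟨0, min 1 (A.min' h), le_refl _, ?_, min_le_left _ _, ?_⟩
      · exact lt_min one_pos (hA _ (A.min'_mem h)).1
      · intro r hr
        rw [card_eq_zero, filter_eq_empty_iff]
        intro a ha
        have : A.min' h ≤ a := A.min'_le a ha
        have : r < a := lt_of_lt_of_le (lt_of_lt_of_le hr.2 (min_le_right _ _)) this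
        linarith
    · refine ⟨0, 1, le_refl _, one_pos, le_refl _, ?_⟩
      intro r hr
      rw [card_eq_zero, filter_eq_empty_iff]
      intro a ha
      exact absurd ⟨a, ha⟩ h
  | succ e ih =>
    intro he
    obtain ⟨lo, hi, hlo, hlh, hhi, hcnt⟩ := ih (Nat.le_of_succ_le he)
    set r₀ := (lo + hi) / 2 with hr₀
    have hr₀m : r₀ ∈ Set.Ioo lo hi := ⟨by simp [hr₀]; linarith, by simp [hr₀]; linarith⟩
    have hc0 := hcnt r₀ hr₀m
    -- there is an element ≥ r₀
    have hS : (A.filter (r₀ ≤ ·)).Nonempty := by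
      by_contra h
      rw [not_nonempty_iff_eq_empty, filter_eq_empty_iff] at h
      have : A.filter (· < r₀) = A := by
        apply filter_true_of_mem
        intro a ha
        by_contra hlt
        exact h ha (le_of_not_gt hlt)
      rw [this] at hc0
      omega
    set a := (A.filter (r₀ ≤ ·)).min' hS with ha
    have haA : a ∈ A := (mem_filter.mp ((A.filter (r₀ ≤ ·)).min'_mem hS)).1
    have har₀ : r₀ ≤ a := (mem_filter.mp ((A.filter (r₀ ≤ ·)).min'_mem hS)).2
    -- next element above a (or 1)
    by_cases hN : (A.filter (a < ·)).Nonempty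
    case pos =>
      refine ⟨a, min 1 ((A.filter (a < ·)).min' hN), (hA a haA).1.le, ?_, min_le_left _ _, ?_⟩
      · refine lt_min (hA a haA).2 ?_
        exact (mem_filter.mp ((A.filter _).min'_mem hN)).2
      · intro r hr
        have key : A.filter (· < r) = insert a (A.filter (· < r₀)) := by
          ext x
          simp only [mem_filter, mem_insert]
          constructor
          · rintro ⟨hx, hxr⟩
            rcases lt_trichotomy x a with h | h | h
            · right
              refine ⟨hx, ?_⟩
              by_contra hge
              have : r₀ ≤ x := le_of_not_gt hge
              have : a ≤ x := min'_le _ _ (mem_filter.mpr ⟨hx, this⟩)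
              linarith
            · exact Or.inl h
            · exfalso
              have : (A.filter (a < ·)).min' hN ≤ x := min'_le _ _ (mem_filter.mpr ⟨hx, h⟩)
              have : min 1 ((A.filter (a < ·)).min' hN) ≤ x := le_trans (min_le_right _ _) this
              linarith [hr.2]
          · rintro (h | ⟨hx, hxr⟩)
            · exact ⟨h ▸ haA, h ▸ hr.1⟩
            · exact ⟨hx, by linarith [hr.1]⟩
        rw [key, card_insert_of_notMem, hc0]
        simp only [mem_filter, not_and]
        intro _
        linarith
    case neg =>
      refine ⟨a, 1, (hA a haA).1.le, (hA a haA).2, le_refl _, ?_⟩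
      intro r hr
      have key : A.filter (· < r) = insert a (A.filter (· < r₀)) := by
        ext x
        simp only [mem_filter, mem_insert]
        constructor
        · rintro ⟨hx, hxr⟩
          rcases lt_trichotomy x a with h | h | h
          · right
            refine ⟨hx, ?_⟩
            by_contra hge
            have : r₀ ≤ x := le_of_not_gt hge
            have : a ≤ x := min'_le _ _ (mem_filter.mpr ⟨hx, this⟩)
            linarith
          · exact Or.inl h
          · exact absurd ⟨x, mem_filter.mpr ⟨hx, h⟩⟩ hN
        · rintro (h | ⟨hx, hxr⟩)
          · exact ⟨h ▸ haA, h ▸ hr.1⟩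
          · exact ⟨hx, by linarith [hr.1]⟩
      rw [key, card_insert_of_notMem, hc0]
      simp only [mem_filter, not_and]
      intro _
      linarith

lemma exists_threshold_s9 (A Z : Finset ℝ) (hA : ∀ a ∈ A, a ∈ Set.Ioo (0:ℝ) 1)
    (e : ℕ) (he : e ≤ A.card) :
    ∃ r ∈ Set.Ioo (0:ℝ) 1, r ∉ Z ∧ (A.filter (· < r)).card = e := by
  obtain ⟨lo, hi, hlo, hlh, hhi, hcnt⟩ := exists_interval A hA e he
  have := (Set.Ioo_infinite hlh).diff Z.finite_toSet
  obtain ⟨r, hr, hrZ⟩ := this.nonempty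
  exact ⟨r, ⟨lt_of_le_of_lt hlo hr.1, lt_of_lt_of_le hr.2 hhi⟩, hrZ, hcnt r hr⟩

set_option maxHeartbeats 1000000 in
lemma exists_s {V : Type*} [Fintype V] (G : SimpleGraph V) (t : V → ℕ) (e : V → ℕ)
    (ht : ∀ v, 1 ≤ t v)
    (he : ∀ v, e v ≤ (univ.filter (fun u => G.Adj u v ∧ t u + 1 = t v)).card) :
    ∃ s : V → ℝ, (∀ v, s v ∈ Set.Ioo (0:ℝ) 1) ∧ Function.Injective s ∧
      ∀ v, (univ.filter (fun u => G.Adj u v ∧ t u + 1 = t v ∧ s u < s v)).card = e v := by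
  classical
  have main : ∀ k : ℕ, ∃ s : V → ℝ, (∀ v, s v ∈ Set.Ioo (0:ℝ) 1) ∧
      Set.InjOn s {v | t v ≤ k} ∧
      ∀ v, t v ≤ k →
        (univ.filter (fun u => G.Adj u v ∧ t u + 1 = t v ∧ s u < s v)).card = e v := by
    intro k
    induction k with
    | zero =>
      refine ⟨fun _ => 1/2, fun v => by norm_num, ?_, ?_⟩
      · intro x hx
        exact absurd (le_trans (ht x) hx) (by norm_num)
      · intro v hv
        exact absurd (le_trans (ht v) hv) (by norm_num)
    | succ k ih =>
      obtain ⟨s, hsIoo, hsInj, hscond⟩ := ih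
      -- inner induction over the finset of level-(k+1) vertices
      have inner : ∀ F : Finset V, (∀ w ∈ F, t w = k + 1) →
          ∃ s' : V → ℝ, (∀ v, t v ≤ k → s' v = s v) ∧ (∀ v, s' v ∈ Set.Ioo (0:ℝ) 1) ∧
            Set.InjOn s' ({v | t v ≤ k} ∪ ↑F) ∧
            (∀ v ∈ F,
              (univ.filter (fun u => G.Adj u v ∧ t u + 1 = t v ∧ s' u < s' v)).card = e v) := by
        intro F
        induction F using Finset.induction_on with
        | empty =>
          intro _
          exact ⟨s, fun v _ => rfl, hsIoo, by simpa using hsInj, by simp⟩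
        | insert w F hw ihF =>
          intro hlev
          have htw : t w = k + 1 := hlev w (mem_insert_self w F)
          obtain ⟨s', hagree, hIoo', hInj', hcond'⟩ :=
            ihF (fun v hv => hlev v (mem_insert_of_mem hv))
          set N := univ.filter (fun u => G.Adj u w ∧ t u + 1 = t w) with hN
          have hNk : ∀ u ∈ N, t u ≤ k := by
            intro u hu
            have := (mem_filter.mp hu).2.2
            omega
          set A := N.image s' with hA
          have hInjN : Set.InjOn s' ↑N := by
            intro x hx y hy hxy
            exact hInj' (Or.inl (hNk x hx)) (Or.inl (hNk y hy)) hxy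
          have hAcard : A.card = N.card := card_image_of_injOn hInjN
          set Z := ((univ.filter (fun v => t v ≤ k)) ∪ F).image s' with hZ
          have heA : e w ≤ A.card := by rw [hAcard]; exact he w
          obtain ⟨r, hrIoo, hrZ, hrcnt⟩ := exists_threshold_s9 A Z
            (fun a ha => by
              obtain ⟨u, hu, rfl⟩ := mem_image.mp ha
              exact hIoo' u) (e w) heA
          refine ⟨Function.update s' w r, ?_, ?_, ?_, ?_⟩
          · intro v hv
            rw [Function.update_of_ne (by rintro rfl; omega)]
            exact hagree v hv
          · intro v
            by_cases hvw : v = w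
            · subst hvw; rw [Function.update_self]; exact hrIoo
            · rw [Function.update_of_ne hvw]; exact hIoo' v
          · -- injectivity on {t ≤ k} ∪ insert w F
            have hmem : ∀ x, x ∈ ({v | t v ≤ k} ∪ ↑(insert w F) : Set V) → x ≠ w →
                x ∈ ({v | t v ≤ k} ∪ ↑F : Set V) := by
              intro x hx hxw
              rcases hx with hx | hx
              · exact Or.inl hx
              · rcases Finset.mem_insert.mp hx with h | h
                · exact absurd h hxw
                · exact Or.inr h
            have hZmem : ∀ x, x ∈ ({v | t v ≤ k} ∪ ↑F : Set V) → s' x ∈ Z := by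
              intro x hx
              apply mem_image_of_mem
              rcases hx with hx | hx
              · exact mem_union_left _ (mem_filter.mpr ⟨mem_univ _, hx⟩)
              · exact mem_union_right _ hx
            intro x hx y hy hxy
            by_cases hxw : x = w <;> by_cases hyw : y = w
            · rw [hxw, hyw]
            · exfalso
              rw [hxw, Function.update_self, Function.update_of_ne hyw] at hxy
              exact hrZ (hxy ▸ hZmem y (hmem y hy hyw))
            · exfalso
              rw [hyw, Function.update_self, Function.update_of_ne hxw] at hxy
              exact hrZ (hxy ▸ hZmem x (hmem x hx hxw))
            · rw [Function.update_of_ne hxw, Function.update_of_ne hyw] at hxy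
              exact hInj' (hmem x hx hxw) (hmem y hy hyw) hxy
          · intro v hv
            rcases Finset.mem_insert.mp hv with rfl | hvF
            · -- v = w : count equals e w via threshold
              have hfil : (univ.filter (fun u => G.Adj u v ∧ t u + 1 = t v ∧
                  Function.update s' v r u < Function.update s' v r v)) =
                  N.filter (fun u => s' u < r) := by
                ext u
                simp only [mem_filter, mem_univ, true_and, hN]
                constructor
                · rintro ⟨h1, h2, h3⟩
                  have huv : u ≠ v := by intro h; subst h; omega
                  rw [Function.update_of_ne huv, Function.update_self] at h3
                  exact ⟨⟨h1, h2⟩, h3⟩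
                · rintro ⟨⟨h1, h2⟩, h3⟩
                  have huv : u ≠ v := by intro h; subst h; omega
                  rw [Function.update_of_ne huv, Function.update_self]
                  exact ⟨h1, h2, h3⟩
              rw [hfil, ← hrcnt]
              have himg : (N.filter (fun u => s' u < r)).image s' = A.filter (· < r) := by
                ext b
                simp only [mem_image, mem_filter, hA]
                constructor
                · rintro ⟨u, ⟨hu, hur⟩, rfl⟩
                  exact ⟨⟨u, hu, rfl⟩, hur⟩
                · rintro ⟨⟨u, hu, rfl⟩, hur⟩
                  exact ⟨u, ⟨hu, hur⟩, rfl⟩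
              rw [← himg]
              exact (card_image_of_injOn (fun x hx y hy hxy =>
                hInjN (filter_subset _ _ hx) (filter_subset _ _ hy) hxy)).symm
            · -- v ∈ F : count unchanged
              have htv : t v = k + 1 := hlev v (mem_insert_of_mem hvF)
              have hvw : v ≠ w := by rintro rfl; exact hw hvF
              rw [← hcond' v hvF]
              apply congrArg
              apply filter_congr
              intro u _
              by_cases huw : u = w
              · subst huw
                constructor <;> (rintro ⟨-, h2, -⟩; omega)
              · rw [Function.update_of_ne huw, Function.update_of_ne hvw]
          -- end insert
      obtain ⟨s', hagree, hIoo', hInj', hcond'⟩ :=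
        inner (univ.filter (fun v => t v = k + 1)) (fun w hw => (mem_filter.mp hw).2)
      refine ⟨s', hIoo', ?_, ?_⟩
      · intro x hx y hy hxy
        apply hInj' ?_ ?_ hxy
        · rcases Nat.lt_succ_iff_lt_or_eq.mp (Nat.lt_succ_of_le hx) with h | h
          · exact Or.inl (Set.mem_setOf.mpr (Nat.lt_succ_iff.mp h))
          · exact Or.inr (by simpa using h)
        · rcases Nat.lt_succ_iff_lt_or_eq.mp (Nat.lt_succ_of_le hy) with h | h
          · exact Or.inl (Set.mem_setOf.mpr (Nat.lt_succ_iff.mp h))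
          · exact Or.inr (by simpa using h)
      · intro v hv
        rcases Nat.lt_succ_iff_lt_or_eq.mp (Nat.lt_succ_of_le hv) with h | h
        · have htv : t v ≤ k := Nat.lt_succ_iff.mp h
          rw [← hscond v htv]
          apply congrArg
          apply filter_congr
          intro u _
          by_cases hcl : G.Adj u v ∧ t u + 1 = t v
          · have hagu : s' u = s u := hagree u (by omega)
            have hagv : s' v = s v := hagree v htv
            rw [hagu, hagv]
          · constructor <;> (rintro ⟨h1, h2, -⟩; exact absurd ⟨h1, h2⟩ hcl)
        · exact hcond' v (mem_filter.mpr ⟨mem_univ _, h⟩)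
  obtain ⟨s, hIoo, hInj, hcond⟩ := main (univ.sup t)
  have hbound : ∀ v : V, t v ≤ univ.sup t := fun v => Finset.le_sup (mem_univ v)
  exact ⟨s, hIoo, fun x y hxy => hInj (hbound x) (hbound y) hxy,
    fun v => hcond v (hbound v)⟩

lemma exists_s' [Fintype V] (G : SimpleGraph V) (t : V → ℕ) (e : V → ℕ)
    (ht : ∀ v, 1 ≤ t v)
    (he : ∀ v, e v ≤ {u | G.Adj u v ∧ t u + 1 = t v}.ncard) :
    ∃ s : V → ℝ, (∀ v, s v ∈ Set.Ioo (0:ℝ) 1) ∧ Function.Injective s ∧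
      ∀ v, {u | G.Adj u v ∧ t u + 1 = t v ∧ s u < s v}.ncard = e v := by
  have hconv : ∀ (p : V → Prop) (h2 : DecidablePred p),
      {u | p u}.ncard = (@Finset.filter V p h2 Finset.univ).card := by
    intro p h2
    rw [ncard_fin p]
    exact congrArg Finset.card (filter_eq_filter p _ h2 _)
  obtain ⟨s, h1, h2, h3⟩ := exists_s G t e ht
    (fun v => le_of_le_of_eq (he v) (hconv _ _))
  exact ⟨s, h1, h2, fun v => (hconv _ _).trans (h3 v)⟩

lemma KG_adj_some (G : SimpleGraph V) (w : V) (y : Option V) :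
    (KG G).Adj (some w) y ↔ y = none ∨ ∃ z, y = some z ∧ G.Adj w z := by
  cases y with
  | none => simp [KG]
  | some z =>
    simp only [KG, ne_eq, Option.some.injEq]
    constructor
    · rintro ⟨hne, h⟩
      exact Or.inr ⟨z, rfl, h w z rfl rfl⟩
    · rintro (h | ⟨z', hz, hadj⟩)
      · exact absurd h (by simp)
      · cases hz
        exact ⟨fun h => G.irrefl (h ▸ hadj), fun a b ha hb => by
          cases ha; cases hb; exact hadj⟩

lemma extract [Fintype V] (G : SimpleGraph V) (c : V → ℤ) (hc : QuasiSuperstable G c) :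
    (∀ v, 0 ≤ c v + 1) ∧
    ∀ X : Set V, X.Nonempty → ∃ v ∈ X,
      c v + 1 ≤ ({u | G.Adj u v ∧ u ∉ X}.ncard : ℤ) := by
  obtain ⟨h1, h2⟩ := hc
  have hpos : ∀ v, 0 ≤ c v + 1 := by
    intro v
    simpa using h1 (some v) (by simp)
  refine ⟨hpos, ?_⟩
  intro X hX
  by_contra hcon
  push_neg at hcon
  apply h2
  refine ⟨some '' X, (hX.image some), by simp, ?_⟩
  rintro v hv
  obtain ⟨w, rfl⟩ := Option.ne_none_iff_exists'.mp hv
  have hadjset : {u : Option V | (KG G).Adj (some w) u}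
      = insert none (some '' {u | G.Adj w u}) := by
    ext y
    rw [Set.mem_setOf_eq, KG_adj_some]
    constructor
    · rintro (h | ⟨z, rfl, hadj⟩)
      · exact Or.inl h
      · exact Or.inr ⟨z, hadj, rfl⟩
    · rintro (h | ⟨z, hadj, rfl⟩)
      · exact Or.inl h
      · exact Or.inr ⟨z, rfl, hadj⟩
  have hvdeg : (vdeg (KG G) (some w) : ℤ) = 1 + ({u | G.Adj w u}.ncard : ℤ) := by
    rw [vdeg, hadjset, Set.ncard_insert_of_notMem (by simp) (Set.toFinite _),
      Set.ncard_image_of_injective _ (Option.some_injective V)]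
    push_cast; ring
  have hcount : {u : Option V | u ∈ some '' X ∧ (KG G).Adj (some w) u}.ncard
      = {u : V | u ∈ X ∧ G.Adj w u}.ncard := by
    rw [show {u : Option V | u ∈ some '' X ∧ (KG G).Adj (some w) u}
        = some '' {u : V | u ∈ X ∧ G.Adj w u} by
      ext y
      simp only [Set.mem_setOf_eq, Set.mem_image]
      constructor
      · rintro ⟨⟨z, hz, rfl⟩, hadj⟩
        rw [KG_adj_some] at hadj
        rcases hadj with h | ⟨z', hz', hadj⟩
        · exact absurd h (by simp)
        · cases hz'; exact ⟨z, ⟨hz, hadj⟩, rfl⟩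
      · rintro ⟨z, ⟨hz, hadj⟩, rfl⟩
        exact ⟨⟨z, hz, rfl⟩, (KG_adj_some G w (some z)).mpr (Or.inr ⟨z, rfl, hadj⟩)⟩]
    exact Set.ncard_image_of_injective _ (Option.some_injective V)
  simp only [Option.elim]
  rw [hcount]
  by_cases hwX : w ∈ X
  · have hind : (some '' ↑X).indicator (fun u => (vdeg (KG G) u : ℤ)) (some w)
        = (vdeg (KG G) (some w) : ℤ) :=
      Set.indicator_of_mem (Set.mem_image_of_mem _ (by simpa using hwX)) _
    rw [hind, hvdeg]
    have hlt := hcon w hwX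
    have hdegsplit : ({u | G.Adj w u}.ncard : ℤ)
        = ({u : V | u ∈ X ∧ G.Adj w u}.ncard : ℤ)
          + ({u : V | G.Adj u w ∧ u ∉ X}.ncard : ℤ) := by
      have hsplit : {u | G.Adj w u}
          = {u : V | u ∈ X ∧ G.Adj w u} ∪ {u : V | G.Adj u w ∧ u ∉ X} := by
        ext u
        simp only [Set.mem_setOf_eq, Set.mem_union]
        constructor
        · intro h
          by_cases hu : u ∈ X
          · exact Or.inl ⟨hu, h⟩
          · exact Or.inr ⟨h.symm, hu⟩
        · rintro (⟨-, h⟩ | ⟨h, -⟩)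
          · exact h
          · exact h.symm
      rw [hsplit, Set.ncard_union_eq ?_ (Set.toFinite _) (Set.toFinite _)]
      · push_cast; ring
      · rw [Set.disjoint_left]
        rintro u ⟨h1, -⟩ ⟨-, h2⟩
        exact h2 h1
    rw [hdegsplit]
    linarith
  · have hind : (some '' ↑X).indicator (fun u => (vdeg (KG G) u : ℤ)) (some w) = 0 := by
      apply Set.indicator_of_notMem
      simp only [Set.mem_image, not_exists]
      rintro z ⟨hz, hzw⟩
      rw [Option.some_inj] at hzw
      exact hwX (hzw ▸ hz)
    rw [hind]
    have := hpos w
    have : (0:ℤ) ≤ ({u : V | u ∈ X ∧ G.Adj w u}.ncard : ℤ) := by positivity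
    linarith

lemma burning [Fintype V] (G : SimpleGraph V) (d : V → ℕ)
    (SP : ∀ X : Set V, X.Nonempty → ∃ v ∈ X, d v ≤ {u | G.Adj u v ∧ u ∉ X}.ncard) :
    ∃ t : V → ℕ, (∀ v, 1 ≤ t v) ∧
      (∀ v, d v ≤ {u | G.Adj u v ∧ t u < t v}.ncard) ∧
      (∀ v, {u | G.Adj u v ∧ t u + 1 < t v}.ncard ≤ d v) := by
  set B : ℕ → Set V := fun k =>
    Nat.rec ∅ (fun _ Bk => Bk ∪ {v | d v ≤ {u | G.Adj u v ∧ u ∈ Bk}.ncard}) k with hB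
  have hB0 : B 0 = ∅ := rfl
  have hBsucc : ∀ k, B (k + 1)
      = B k ∪ {v | d v ≤ {u | G.Adj u v ∧ u ∈ B k}.ncard} := fun k => rfl
  have hmono : ∀ k, B k ⊆ B (k + 1) := by
    intro k
    rw [hBsucc]
    exact Set.subset_union_left
  have hmono' : ∀ k l, k ≤ l → B k ⊆ B l := by
    intro k l hkl
    induction l with
    | zero => rw [Nat.le_zero.mp hkl]
    | succ l ih =>
      rcases Nat.lt_succ_iff_lt_or_eq.mp (Nat.lt_succ_of_le hkl) with h | h
      · exact (ih (Nat.lt_succ_iff.mp h)).trans (hmono l)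
      · rw [h]
  have hgrow : ∀ k, B k ≠ Set.univ → B k ⊂ B (k + 1) := by
    intro k hk
    obtain ⟨v, hv, hd⟩ := SP (B k)ᶜ (by
      rw [Set.nonempty_compl]
      exact hk)
    have hd' : d v ≤ {u | G.Adj u v ∧ u ∈ B k}.ncard := by
      have : {u | G.Adj u v ∧ u ∉ (B k)ᶜ} = {u | G.Adj u v ∧ u ∈ B k} := by
        ext u; simp [Set.mem_compl_iff]
      rwa [this] at hd
    rw [Set.ssubset_iff_of_subset (hmono k)]
    refine ⟨v, ?_, hv⟩
    rw [hBsucc]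
    exact Or.inr hd'
  have huniv : B (Fintype.card V) = Set.univ := by
    have key : ∀ k, B k = Set.univ ∨ k ≤ (B k).ncard := by
      intro k
      induction k with
      | zero => exact Or.inr (Nat.zero_le _)
      | succ k ih =>
        rcases ih with h | h
        · exact Or.inl (Set.eq_univ_of_univ_subset (h ▸ hmono k))
        · by_cases hk : B k = Set.univ
          · exact Or.inl (Set.eq_univ_of_univ_subset (hk ▸ hmono k))
          · exact Or.inr (Nat.succ_le_of_lt (lt_of_le_of_lt h
              (Set.ncard_lt_ncard (hgrow k hk) (Set.toFinite _))))
    rcases key (Fintype.card V) with h | h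
    · exact h
    · apply Set.eq_of_subset_of_ncard_le (Set.subset_univ _) ?_ (Set.toFinite _)
      rw [Set.ncard_univ, Nat.card_eq_fintype_card]
      exact h
  have hex : ∀ v : V, ∃ k, v ∈ B k := fun v => ⟨Fintype.card V, by rw [huniv]; trivial⟩
  set t : V → ℕ := fun v => Nat.find (hex v) with ht
  have htmem : ∀ v k, v ∈ B k ↔ t v ≤ k := by
    intro v k
    constructor
    · intro h
      exact Nat.find_min' (hex v) h
    · intro h
      exact hmono' (t v) k h (Nat.find_spec (hex v))
  have ht1 : ∀ v, 1 ≤ t v := by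
    intro v
    by_contra h
    have : v ∈ B 0 := (htmem v 0).mpr (by omega)
    rw [hB0] at this
    exact this
  refine ⟨t, ht1, ?_, ?_⟩
  · -- F1
    intro v
    have hvB : v ∈ B (t v) := Nat.find_spec (hex v)
    have hsub : t v = (t v - 1) + 1 := by have := ht1 v; omega
    have hvnot : v ∉ B (t v - 1) := by
      intro h
      have := (htmem v (t v - 1)).mp h
      have := ht1 v
      omega
    rw [hsub, hBsucc] at hvB
    rcases hvB with h | h
    · exact absurd h hvnot
    · have hset : {u | G.Adj u v ∧ u ∈ B (t v - 1)} = {u | G.Adj u v ∧ t u < t v} := by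
        ext u
        simp only [Set.mem_setOf_eq, htmem]
        have := ht1 v
        constructor
        · rintro ⟨h1, h2⟩; exact ⟨h1, by omega⟩
        · rintro ⟨h1, h2⟩; exact ⟨h1, by omega⟩
      rw [← hset]
      exact h
  · -- F2
    intro v
    by_cases htv : t v ≤ 1
    · have : {u | G.Adj u v ∧ t u + 1 < t v} = ∅ := by
        ext u
        simp only [Set.mem_setOf_eq, Set.mem_empty_iff_false, iff_false, not_and]
        intro _
        omega
      rw [this]
      simp
    · push_neg at htv
      have hvnot : v ∉ B (t v - 1) := by
        intro h
        have := (htmem v (t v - 1)).mp h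
        omega
      have hsub : t v - 1 = (t v - 2) + 1 := by omega
      rw [hsub, hBsucc] at hvnot
      have hnot2 : ¬ d v ≤ {u | G.Adj u v ∧ u ∈ B (t v - 2)}.ncard := by
        intro h
        exact hvnot (Or.inr h)
      have hset : {u | G.Adj u v ∧ u ∈ B (t v - 2)} = {u | G.Adj u v ∧ t u + 1 < t v} := by
        ext u
        simp only [Set.mem_setOf_eq, htmem]
        constructor
        · rintro ⟨h1, h2⟩; exact ⟨h1, by omega⟩
        · rintro ⟨h1, h2⟩; exact ⟨h1, by omega⟩
      rw [hset] at hnot2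
      omega

end Aux


/-- For every quasi-superstable divisor `c` on `G` there is a region `r` of the
`G`-semiorder arrangement such that for every `x ∈ r` and every vertex `v`,
`c v` equals the number of `u` with `{u,v} ∈ E` and `x v > x u + 1`, minus `1`;
hence the Pak-Stanley labeling of regions is surjective onto quasi-superstables. -/
theorem stmt9 {V : Type*} [Fintype V] (G : SimpleGraph V) (hconn : G.Connected)
    (c : V → ℤ) (hc : QuasiSuperstable G c) :
    ∃ r ∈ Regions G, ∀ x ∈ r, ∀ v : V,
      c v = ({u : V | G.Adj u v ∧ x u + 1 < x v}.ncard : ℤ) - 1 := by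
  classical
  obtain ⟨hpos, hSP⟩ := extract G c hc
  set d : V → ℕ := fun v => (c v + 1).toNat with hd
  have hdc : ∀ v, (d v : ℤ) = c v + 1 := fun v => Int.toNat_of_nonneg (hpos v)
  have SP : ∀ X : Set V, X.Nonempty → ∃ v ∈ X, d v ≤ {u | G.Adj u v ∧ u ∉ X}.ncard := by
    intro X hX
    obtain ⟨v, hv, h⟩ := hSP X hX
    refine ⟨v, hv, ?_⟩
    have := hdc v
    omega
  obtain ⟨t, ht1, hF1, hF2⟩ := burning G d SP
  have hsplitset : ∀ v, {u | G.Adj u v ∧ t u < t v}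
      = {u | G.Adj u v ∧ t u + 1 < t v} ∪ {u | G.Adj u v ∧ t u + 1 = t v} := by
    intro v
    ext u
    simp only [Set.mem_setOf_eq, Set.mem_union]
    constructor
    · rintro ⟨h1, h2⟩
      by_cases h : t u + 1 < t v
      · exact Or.inl ⟨h1, h⟩
      · exact Or.inr ⟨h1, by omega⟩
    · rintro (⟨h1, h2⟩ | ⟨h1, h2⟩)
      · exact ⟨h1, by omega⟩
      · exact ⟨h1, by omega⟩
  have hsum : ∀ v, {u | G.Adj u v ∧ t u < t v}.ncard
      = {u | G.Adj u v ∧ t u + 1 < t v}.ncard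
        + {u | G.Adj u v ∧ t u + 1 = t v}.ncard := by
    intro v
    rw [hsplitset v, Set.ncard_union_eq ?_ (Set.toFinite _) (Set.toFinite _)]
    rw [Set.disjoint_left]
    rintro u ⟨-, h1⟩ ⟨-, h2⟩
    omega
  set a : V → ℕ := fun v => {u | G.Adj u v ∧ t u + 1 < t v}.ncard with ha
  set e : V → ℕ := fun v => d v - a v with he
  have hae : ∀ v, a v + e v = d v := by
    intro v
    have h2 := hF2 v
    have he' : e v = d v - a v := rfl
    have ha' : a v = {u | G.Adj u v ∧ t u + 1 < t v}.ncard := rfl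
    omega
  have hem : ∀ v, e v ≤ {u | G.Adj u v ∧ t u + 1 = t v}.ncard := by
    intro v
    have h1 := hF1 v
    have h2 := hsum v
    have he' : e v = d v - a v := rfl
    have ha' : a v = {u | G.Adj u v ∧ t u + 1 < t v}.ncard := rfl
    omega
  obtain ⟨s, hIoo, hInj, hcnt⟩ := exists_s' G t e ht1 hem
  set x : V → ℝ := fun v => (t v : ℝ) + s v / 2 with hxdef
  have hsb : ∀ w, 0 < s w ∧ s w < 1 := fun w => ⟨(hIoo w).1, (hIoo w).2⟩
  have hclass : ∀ u v : V,
      (x u + 1 < x v ↔ (t u + 1 < t v ∨ (t u + 1 = t v ∧ s u < s v))) := by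
    intro u v
    have hu := hsb u; have hv := hsb v
    simp only [hxdef]
    by_cases h1 : t u + 1 < t v
    · have hc : (t u : ℝ) + 2 ≤ (t v : ℝ) := by exact_mod_cast h1
      constructor
      · intro _; exact Or.inl h1
      · intro _; linarith [hu.1, hu.2, hv.1, hv.2]
    · by_cases h2 : t u + 1 = t v
      · have hc : (t u : ℝ) + 1 = (t v : ℝ) := by exact_mod_cast h2
        constructor
        · intro h; exact Or.inr ⟨h2, by linarith⟩
        · rintro (h | ⟨-, h⟩)
          · exact absurd h h1
          · linarith
      · have h3 : t v ≤ t u := by omega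
        have hc : (t v : ℝ) ≤ (t u : ℝ) := by exact_mod_cast h3
        constructor
        · intro h; exfalso; linarith [hu.1, hu.2, hv.1, hv.2]
        · rintro (h | ⟨h, -⟩)
          · exact absurd h h1
          · exact absurd h h2
  have hcount : ∀ v, {u | G.Adj u v ∧ x u + 1 < x v}.ncard = d v := by
    intro v
    have hset : {u | G.Adj u v ∧ x u + 1 < x v}
        = {u | G.Adj u v ∧ t u + 1 < t v}
          ∪ {u | G.Adj u v ∧ t u + 1 = t v ∧ s u < s v} := by
      ext u
      simp only [Set.mem_setOf_eq, Set.mem_union, hclass]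
      constructor
      · rintro ⟨h1, h | h⟩
        · exact Or.inl ⟨h1, h⟩
        · exact Or.inr ⟨h1, h⟩
      · rintro (⟨h1, h⟩ | ⟨h1, h⟩)
        · exact ⟨h1, Or.inl h⟩
        · exact ⟨h1, Or.inr h⟩
    rw [hset, Set.ncard_union_eq ?_ (Set.toFinite _) (Set.toFinite _), hcnt v]
    · exact hae v
    · rw [Set.disjoint_left]
      rintro u ⟨-, h1⟩ ⟨-, h2, -⟩
      omega
  have hxmem : x ∉ hyperplanesUnion G := by
    rintro ⟨u, v, hadj, heq⟩
    have hu := hsb u; have hv := hsb v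
    simp only [hxdef] at heq
    have h1 : (1/2 : ℝ) < (t u : ℝ) - (t v : ℝ) := by linarith
    have h2 : (t u : ℝ) - (t v : ℝ) < 3/2 := by linarith
    have h3 : t v < t u := by
      have : (t v : ℝ) < (t u : ℝ) := by linarith
      exact_mod_cast this
    have h4 : t u ≤ t v + 1 := by
      by_contra h
      push_neg at h
      have : (t v : ℝ) + 2 ≤ (t u : ℝ) := by exact_mod_cast h
      linarith
    have h5 : t u = t v + 1 := by omega
    have h6 : (t u : ℝ) = (t v : ℝ) + 1 := by exact_mod_cast h5
    have h7 : s u = s v := by linarith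
    have h8 : u = v := hInj h7
    exact G.irrefl (h8 ▸ hadj)
  refine ⟨connectedComponentIn (hyperplanesUnion G)ᶜ x, ⟨x, hxmem, rfl⟩, ?_⟩
  intro y hy v
  have hxr : x ∈ connectedComponentIn (hyperplanesUnion G)ᶜ x :=
    mem_connectedComponentIn hxmem
  have hpre : IsPreconnected (connectedComponentIn (hyperplanesUnion G)ᶜ x) :=
    isPreconnected_connectedComponentIn
  have hsubc : connectedComponentIn (hyperplanesUnion G)ᶜ x ⊆ (hyperplanesUnion G)ᶜ :=
    connectedComponentIn_subset _ _
  have hiff : ∀ p q : V, G.Adj p q → (y p + 1 < y q ↔ x p + 1 < x q) := by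
    intro p q hpq
    have hU : IsOpen {z : V → ℝ | z p + 1 < z q} :=
      isOpen_lt ((continuous_apply p).add continuous_const) (continuous_apply q)
    have hW : IsOpen {z : V → ℝ | z q < z p + 1} :=
      isOpen_lt (continuous_apply q) ((continuous_apply p).add continuous_const)
    have hdisj : Disjoint {z : V → ℝ | z p + 1 < z q} {z : V → ℝ | z q < z p + 1} := by
      rw [Set.disjoint_left]
      rintro z h1 h2
      simp only [Set.mem_setOf_eq] at h1 h2
      linarith
    have hcov : connectedComponentIn (hyperplanesUnion G)ᶜ x
        ⊆ {z : V → ℝ | z p + 1 < z q} ∪ {z : V → ℝ | z q < z p + 1} := by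
      intro z hz
      have hzc := hsubc hz
      have hne : z q ≠ z p + 1 := by
        intro h
        exact hzc ⟨q, p, hpq.symm, by linarith⟩
      rcases hne.lt_or_gt with h | h
      · exact Or.inr h
      · exact Or.inl h
    rcases hpre.subset_or_subset hU hW hdisj hcov with h | h
    · exact iff_of_true (h hy) (h hxr)
    · exact iff_of_false (lt_asymm (h hy)) (lt_asymm (h hxr))
  have hseteq : {u | G.Adj u v ∧ y u + 1 < y v} = {u | G.Adj u v ∧ x u + 1 < x v} := by
    ext u
    simp only [Set.mem_setOf_eq]
    constructor
    · rintro ⟨h1, h2⟩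
      exact ⟨h1, (hiff u v h1).mp h2⟩
    · rintro ⟨h1, h2⟩
      exact ⟨h1, (hiff u v h1).mpr h2⟩
  rw [hseteq, hcount v]
  have := hdc v
  omega


end Soap
end

section
/- Fix a vertex v₀ of G, let X be the set of vertices v ≠ v₀ with {v,v₀} ∉ E, and let c be a function from V∖{v₀} to ℤ. Then c + 1_X is a superstable configuration on K(G)₀ if and only if both (i) the configuration on K(G) taking value 0 at v₀ and value c(v) + 1 at each v ≠ v₀ is superstable on K(G), and (ii) c(v) ≥ -1 for every v ∈ X and c(v) ≥ 0 for every v ∈ V∖{v₀} with v ∉ X. -/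
namespace Soap

variable {V : Type*} {W : Type*}

section Aux

variable {V : Type*} [Fintype V] [DecidableEq V] (G : SimpleGraph V)

lemma kg_adj_some_some {u v : V} : (KG G).Adj (some u) (some v) ↔ G.Adj u v := by
  constructor
  · rintro ⟨-, h⟩; exact h u v rfl rfl
  · intro h
    exact ⟨by simpa using h.ne, fun a b ha hb => by
      simp only [Option.some.injEq] at ha hb; subst ha; subst hb; exact h⟩

lemma kg_adj_some_none {u : V} : (KG G).Adj (some u) none := by
  exact ⟨by simp, fun a b _ hb => by simp at hb⟩

lemma kg_nbhd (v : V) :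
    {y | (KG G).Adj (some v) y} = insert none (some '' {u | G.Adj v u}) := by
  ext y
  cases y with
  | none => simp [kg_adj_some_none]
  | some u => simp [kg_adj_some_some]

lemma vdeg_kg (v : V) : vdeg (KG G) (some v) = vdeg G v + 1 := by
  unfold vdeg
  rw [kg_nbhd, Set.ncard_insert_of_notMem (by simp) (Set.toFinite _),
    Set.ncard_image_of_injective _ (Option.some_injective V)]

lemma kg0_adj {v₀ v u : V} (hv : v ≠ v₀) :
    (KG0 G v₀).Adj v u ↔ G.Adj v u ∨ u = v₀ := by
  constructor
  · rintro (h | ⟨hne, h | h⟩)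
    · exact Or.inl h
    · exact absurd h hv
    · exact Or.inr h
  · rintro (h | rfl)
    · exact Or.inl h
    · exact Or.inr ⟨hv, Or.inr rfl⟩

open Classical in
lemma vdeg_kg0 {v₀ v : V} (hv : v ≠ v₀) :
    (vdeg (KG0 G v₀) v : ℤ) = vdeg G v + (if G.Adj v v₀ then 0 else 1) := by
  have hset : {u | (KG0 G v₀).Adj v u} = insert v₀ {u | G.Adj v u} := by
    ext u; simp [kg0_adj G hv, or_comm]
  unfold vdeg
  rw [hset]
  by_cases h : G.Adj v v₀
  · have hm : v₀ ∈ {u | G.Adj v u} := h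
    rw [Set.insert_eq_self.mpr hm, if_pos h]; ring
  · have hm : v₀ ∉ {u | G.Adj v u} := h
    rw [Set.ncard_insert_of_notMem hm (Set.toFinite _), if_neg h]
    push_cast; ring

lemma kg_count (Y : Set V) (v : V) :
    ({u | u ∈ some '' Y ∧ (KG G).Adj (some v) u}.ncard : ℤ)
      = ({u | u ∈ Y ∧ G.Adj v u}.ncard : ℤ) := by
  have hset : {u | u ∈ some '' Y ∧ (KG G).Adj (some v) u}
      = some '' {u | u ∈ Y ∧ G.Adj v u} := by
    ext y
    cases y with
    | none => simp
    | some u => simp [kg_adj_some_some]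
  rw [hset, Set.ncard_image_of_injective _ (Option.some_injective V)]

lemma kg0_count {Y : Set V} {v₀ v : V} (hv : v ≠ v₀) (hY : v₀ ∉ Y) :
    {u | u ∈ Y ∧ (KG0 G v₀).Adj v u} = {u | u ∈ Y ∧ G.Adj v u} := by
  ext u
  simp only [Set.mem_setOf_eq, kg0_adj G hv, and_congr_right_iff]
  intro hu
  constructor
  · rintro (h | rfl)
    · exact h
    · exact absurd hu hY
  · exact Or.inl

end Aux

/-- Fix `v₀ ∈ V` and let `X = {v ≠ v₀ : {v,v₀} ∉ E}`.  For `c : V∖{v₀} → ℤ`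
(modeled as `c : V → ℤ` with the value at the sink `v₀` irrelevant), `c + 1_X` is
superstable on `K(G)₀` iff (i) the configuration on `K(G)` with value `0` at `v₀`
and `c v + 1` at `v ≠ v₀` is superstable on `K(G)`, and (ii) `c v ≥ -1` for
`v ∈ X` and `c v ≥ 0` for nonsink `v ∉ X`. -/
theorem stmt14 {V : Type*} [Fintype V] [DecidableEq V] (G : SimpleGraph V)
    (hconn : G.Connected) (v₀ : V) (c : V → ℤ) :
    Superstable (KG0 G v₀) v₀
      (fun v => c v + ({v : V | v ≠ v₀ ∧ ¬ G.Adj v v₀}.indicator (fun _ => (1 : ℤ)) v)) ↔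
    (Superstable (KG G) none
        (fun x => x.elim 0 (fun v => if v = v₀ then 0 else c v + 1)) ∧
      (∀ v, v ≠ v₀ → ¬ G.Adj v v₀ → -1 ≤ c v) ∧
      (∀ v, v ≠ v₀ → G.Adj v v₀ → 0 ≤ c v)) := by
  classical
  set X₀ : Set V := {v : V | v ≠ v₀ ∧ ¬ G.Adj v v₀} with hX₀
  have hind : ∀ v, v ≠ v₀ →
      X₀.indicator (fun _ => (1:ℤ)) v = if G.Adj v v₀ then 0 else 1 := by
    intro v hv
    by_cases h : G.Adj v v₀
    · rw [if_pos h, Set.indicator_of_notMem (by simp [hX₀, h])]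
    · rw [if_neg h, Set.indicator_of_mem (show v ∈ X₀ from ⟨hv, h⟩)]
  constructor
  · rintro ⟨hpos, hfire⟩
    have hb1 : ∀ v, v ≠ v₀ → ¬ G.Adj v v₀ → -1 ≤ c v := by
      intro v hv h
      have h2 := hpos v hv
      simp only [hind v hv, if_neg h] at h2
      linarith
    have hb2 : ∀ v, v ≠ v₀ → G.Adj v v₀ → 0 ≤ c v := by
      intro v hv h
      have h2 := hpos v hv
      simp only [hind v hv, if_pos h] at h2
      linarith
    refine ⟨⟨?_, ?_⟩, hb1, hb2⟩
    · rintro (_ | v) hv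
      · exact absurd rfl hv
      · simp only [Option.elim]
        by_cases h : v = v₀
        · simp [h]
        · rw [if_neg h]
          by_cases ha : G.Adj v v₀
          · have := hb2 v h ha; linarith
          · have := hb1 v h ha; linarith
    · rintro ⟨X, hXne, hXq, hX⟩
      have hv₀X : some v₀ ∉ X := by
        intro hmem
        have h1 := hX (some v₀) (by simp)
        rw [Set.indicator_of_mem hmem] at h1
        simp only [Option.elim, if_pos rfl] at h1
        have hle : ({u | u ∈ X ∧ (KG G).Adj (some v₀) u}.ncard : ℤ)
            ≤ (vdeg G v₀ : ℤ) := by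
          have hsub : {u | u ∈ X ∧ (KG G).Adj (some v₀) u}
              ⊆ some '' {u | G.Adj v₀ u} := by
            rintro y ⟨hy, hadj⟩
            cases y with
            | none => exact absurd hy hXq
            | some u => exact ⟨u, (kg_adj_some_some G).mp hadj, rfl⟩
          have h3 := Set.ncard_le_ncard hsub (Set.toFinite _)
          rw [Set.ncard_image_of_injective _ (Option.some_injective V)] at h3
          exact_mod_cast h3
        rw [vdeg_kg] at h1
        push_cast at h1
        linarith
      set Y : Set V := {v | some v ∈ X} with hY
      have hXY : X = some '' Y := by
        ext y
        cases y with
        | none => simpa using hXq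
        | some u => simp [hY]
      have hYne : Y.Nonempty := by
        obtain ⟨y, hy⟩ := hXne
        cases y with
        | none => exact absurd hy hXq
        | some u => exact ⟨u, hy⟩
      have hv₀Y : v₀ ∉ Y := hv₀X
      refine hfire ⟨Y, hYne, hv₀Y, ?_⟩
      intro v hv
      have h1 := hX (some v) (by simp)
      rw [hXY] at h1
      simp only [Option.elim, if_neg hv] at h1
      rw [kg_count] at h1
      simp only [hind v hv]
      rw [kg0_count G hv hv₀Y]
      by_cases hmem : v ∈ Y
      · rw [Set.indicator_of_mem (Set.mem_image_of_mem _ hmem), vdeg_kg] at h1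
        rw [Set.indicator_of_mem hmem, vdeg_kg0 G hv]
        push_cast at h1 ⊢
        split_ifs <;> linarith
      · rw [Set.indicator_of_notMem (by
          rw [(Option.some_injective V).mem_set_image]; exact hmem)] at h1
        rw [Set.indicator_of_notMem hmem]
        have haG : (0:ℤ) ≤ ({u | u ∈ Y ∧ G.Adj v u}.ncard : ℤ) := Int.natCast_nonneg _
        split_ifs with ha
        · have := hb2 v hv ha; linarith
        · linarith
  · rintro ⟨⟨hpos', hfire'⟩, hb1, hb2⟩
    constructor
    · intro v hv
      simp only [hind v hv]
      split_ifs with ha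
      · have := hb2 v hv ha; linarith
      · have := hb1 v hv ha; linarith
    · rintro ⟨Y, hYne, hYv₀, hY⟩
      refine hfire' ⟨some '' Y, hYne.image _, by simp, ?_⟩
      rintro (_ | v) hv
      · exact absurd rfl hv
      · simp only [Option.elim]
        by_cases hvv : v = v₀
        · subst hvv
          rw [if_pos rfl, Set.indicator_of_notMem (by
            rw [(Option.some_injective V).mem_set_image]; exact hYv₀)]
          have : (0:ℤ) ≤ ({u | u ∈ some '' Y ∧ (KG G).Adj (some v) u}.ncard : ℤ) :=
            Int.natCast_nonneg _
          linarith
        · rw [if_neg hvv, kg_count]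
          have h1 := hY v hvv
          simp only [hind v hvv] at h1
          rw [kg0_count G hvv hYv₀] at h1
          by_cases hmem : v ∈ Y
          · rw [Set.indicator_of_mem hmem, vdeg_kg0 G hvv] at h1
            rw [Set.indicator_of_mem (Set.mem_image_of_mem _ hmem), vdeg_kg]
            push_cast at h1 ⊢
            split_ifs at h1 <;> linarith
          · rw [Set.indicator_of_notMem hmem] at h1
            rw [Set.indicator_of_notMem (by
              rw [(Option.some_injective V).mem_set_image]; exact hmem)]
            split_ifs at h1 <;> linarith

end Soap
end
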